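/- arXiv:1010.5673 — 6 statements merged into one kernel-verified Lean document; each statement's English description precedes it below -/
import Mathlib

section
/- For all n ≥ 1 and k ≥ 1, the number of Dyck paths of semilength n with exactly k up steps at height h ≡ 0 (mod 3) equals the number of Dyck paths of semilength n with exactly k+1 up steps at height h ≡ 2 (mod 3). -/
/-- A Dyck path of semilength `n`, encoded as a list of booleans where
`true` is an up step `(1,1)` and `false` is a down step `(1,-1)`;
the path never goes below the x-axis. -/
def IsDyckPath (n : ℕ) (p : List Bool) : Prop :=
  p.length = 2 * n ∧ p.count true = n ∧
  ∀ i, (p.take i).count false ≤ (p.take i).count true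

/-- The height of the `i`-th step: the y-coordinate reached after step `i`.
For an up step this is the height `h` such that the step rises from `y = h-1` to `y = h`. -/
def stepHeight (p : List Bool) (i : ℕ) : ℕ :=
  (p.take (i + 1)).count true - (p.take (i + 1)).count false

/-- The number of up steps of `p` at height `h` with `h ≡ c (mod m)`. -/
def upStepsMod (m c : ℕ) (p : List Bool) : ℕ :=
  ((Finset.range p.length).filter
    (fun i => p.getD i false = true ∧ stepHeight p i % m = c)).card

namespace DyckAux

open DyckStep List Polynomial Finset

/-! ### Marked step counts -/

/-- marked up-step count on bool lists, tracking height `h`. -/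
def bcnt (c : ℕ) : ℕ → List Bool → ℕ
  | _, [] => 0
  | h, true :: l => (if (h + 1) % 3 = c then 1 else 0) + bcnt c (h + 1) l
  | h, false :: l => bcnt c (h - 1) l

/-- marked up-step count on DyckStep lists. -/
def dcnt (c : ℕ) : ℕ → List DyckStep → ℕ
  | _, [] => 0
  | h, U :: l => (if (h + 1) % 3 = c then 1 else 0) + dcnt c (h + 1) l
  | h, D :: l => dcnt c (h - 1) l

lemma count_true_add_count_false : ∀ l : List Bool, l.count true + l.count false = l.length := by
  intro l
  induction l with
  | nil => rfl
  | cons b t ih => cases b <;> simp [List.count_cons] <;> omega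

lemma bridging (c : ℕ) : ∀ (p : List Bool) (h : ℕ),
    (∀ i, (p.take i).count false ≤ h + (p.take i).count true) →
    ((Finset.range p.length).filter
      (fun i => p.getD i false = true ∧
        (h + (p.take (i+1)).count true - (p.take (i+1)).count false) % 3 = c)).card
      = bcnt c h p := by
  intro p
  induction p with
  | nil => intro h _; simp [bcnt]
  | cons b q ih =>
    intro h hyp
    rw [Finset.card_filter, List.length_cons, Finset.sum_range_succ']
    have hq : ∀ i, (q.take i).count false ≤ (if b then h + 1 else h - 1) + (q.take i).count true := by
      intro i
      have := hyp (i + 1)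
      have h1 := hyp 1
      cases b <;> simp [List.count_cons] at this h1 ⊢ <;> omega
    have hrec := ih (if b then h + 1 else h - 1) hq
    rw [Finset.card_filter] at hrec
    have hterm : ∀ i : ℕ,
        (if (b :: q).getD (i+1) false = true ∧
            (h + ((b :: q).take (i+1+1)).count true - ((b :: q).take (i+1+1)).count false) % 3 = c
          then 1 else 0)
        = (if q.getD i false = true ∧
            ((if b then h + 1 else h - 1) + (q.take (i+1)).count true - (q.take (i+1)).count false) % 3 = c
          then 1 else 0) := by
      intro i
      have h1 := hyp 1
      congr 1
      have harith : (h + (b :: q.take (i+1)).count true - (b :: q.take (i+1)).count false)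
          = ((if b then h + 1 else h - 1) + (q.take (i+1)).count true - (q.take (i+1)).count false) := by
        cases b <;> simp [List.count_cons] at h1 ⊢ <;> omega
      simp [harith]
    simp only [hterm]
    rw [hrec]
    cases b
    · simp [bcnt]
    · have h1 := hyp 1
      simp [List.count_cons, bcnt] at h1 ⊢
      omega

lemma upStepsMod_eq_bcnt (c : ℕ) (p : List Bool)
    (hyp : ∀ i, (p.take i).count false ≤ (p.take i).count true) :
    upStepsMod 3 c p = bcnt c 0 p := by
  rw [upStepsMod, ← bridging c p 0 (by simpa using hyp)]
  congr 1
  apply Finset.filter_congr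
  intro i _
  simp [stepHeight]

/-! ### dcnt structure lemmas -/

/-- final height -/
def hgt : ℕ → List DyckStep → ℕ
  | h, [] => h
  | h, U :: l => hgt (h + 1) l
  | h, D :: l => hgt (h - 1) l

lemma dcnt_append (c : ℕ) : ∀ (l l' : List DyckStep) (h : ℕ),
    dcnt c h (l ++ l') = dcnt c h l + dcnt c (hgt h l) l' := by
  intro l
  induction l with
  | nil => intro l' h; simp [dcnt, hgt]
  | cons s t ih => intro l' h; cases s <;> simp [dcnt, hgt, ih] <;> omega

/-- prefix-nonnegativity relative to `h` -/
def Ok (h : ℕ) (l : List DyckStep) : Prop :=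
  ∀ i, (l.take i).count D ≤ h + (l.take i).count U

lemma ok_tail_U {h : ℕ} {l : List DyckStep} (hyp : Ok h (U :: l)) : Ok (h + 1) l := by
  intro i
  have := hyp (i + 1)
  simp [List.count_cons] at this
  omega

lemma ok_tail_D {h : ℕ} {l : List DyckStep} (hyp : Ok h (D :: l)) : Ok (h - 1) l ∧ 1 ≤ h := by
  have h1 := hyp 1
  simp [List.count_cons] at h1
  refine ⟨fun i => ?_, h1⟩
  have := hyp (i + 1)
  simp [List.count_cons] at this
  omega

lemma hgt_eq : ∀ (l : List DyckStep) (h : ℕ), Ok h l →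
    hgt h l + l.count D = h + l.count U := by
  intro l
  induction l with
  | nil => intro h _; simp [hgt]
  | cons s t ih =>
    intro h hyp
    cases s
    · have := ih (h + 1) (ok_tail_U hyp)
      simp [hgt, List.count_cons]
      omega
    · obtain ⟨ho, h1⟩ := ok_tail_D hyp
      have := ih (h - 1) ho
      simp [hgt, List.count_cons]
      omega

lemma dcnt_shift3 (c : ℕ) : ∀ (l : List DyckStep) (h : ℕ), Ok h l →
    dcnt c (h + 3) l = dcnt c h l := by
  intro l
  induction l with
  | nil => intro h _; simp [dcnt]
  | cons s t ih =>
    intro h hyp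
    cases s
    · have := ih (h + 1) (ok_tail_U hyp)
      simp only [dcnt]
      rw [show h + 3 + 1 = (h + 1) + 3 by ring, this, Nat.add_mod_right]
    · obtain ⟨ho, h1⟩ := ok_tail_D hyp
      have := ih (h - 1) ho
      simp only [dcnt]
      rw [show h + 3 - 1 = (h - 1) + 3 by omega, this]

lemma dcnt_two_shift : ∀ (l : List DyckStep) (h : ℕ), Ok h l →
    dcnt 2 h l = dcnt 0 (h + 1) l := by
  intro l
  induction l with
  | nil => intro h _; simp [dcnt]
  | cons s t ih =>
    intro h hyp
    cases s
    · have := ih (h + 1) (ok_tail_U hyp)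
      simp only [dcnt, this]
      congr 1
      have : (h + 1) % 3 = 2 ↔ (h + 1 + 1) % 3 = 0 := by omega
      split <;> rename_i hsp <;> simp_all
    · obtain ⟨ho, h1⟩ := ok_tail_D hyp
      have := ih (h - 1) ho
      simp only [dcnt, this]
      rw [show h + 1 - 1 = (h - 1) + 1 by omega]

/-! ### transfer from bool lists -/

def toStep (b : Bool) : DyckStep := cond b U D
def toBool (s : DyckStep) : Bool := match s with | U => true | D => false

lemma bcnt_eq_dcnt (c : ℕ) : ∀ (l : List Bool) (h : ℕ),
    bcnt c h l = dcnt c h (l.map toStep) := by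
  intro l
  induction l with
  | nil => intro h; simp [bcnt, dcnt]
  | cons b t ih => intro h; cases b <;> simp [bcnt, dcnt, toStep, ih]

lemma map_toStep_toBool : ∀ l : List DyckStep, (l.map toBool).map toStep = l := by
  intro l; induction l with
  | nil => rfl
  | cons s t ih => cases s <;> simp [toStep, toBool, ih]

lemma map_toBool_toStep : ∀ l : List Bool, (l.map toStep).map toBool = l := by
  intro l; induction l with
  | nil => rfl
  | cons b t ih => cases b <;> simp [toStep, toBool, ih]

lemma count_U_map (l : List Bool) : (l.map toStep).count U = l.count true := by
  have : U = toStep true := rfl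
  rw [this, List.count_map_of_injective]
  intro a b; cases a <;> cases b <;> simp [toStep]

lemma count_D_map (l : List Bool) : (l.map toStep).count D = l.count false := by
  have : D = toStep false := rfl
  rw [this, List.count_map_of_injective]
  intro a b; cases a <;> cases b <;> simp [toStep]

/-! ### Dyck words -/

lemma ok_of_dyckWord (w : DyckWord) (h : ℕ) : Ok h w.toList :=
  fun i => le_trans (w.count_D_le_count_U i) (Nat.le_add_left _ _)

lemma hgt_dyckWord (w : DyckWord) (h : ℕ) : hgt h w.toList = h := by
  have := hgt_eq w.toList h (ok_of_dyckWord w h)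
  have h2 := w.count_U_eq_count_D
  omega

lemma toList_add (p q : DyckWord) : (p + q).toList = p.toList ++ q.toList := rfl
lemma toList_nest (p : DyckWord) : p.nest.toList = [U] ++ p.toList ++ [D] := rfl

lemma dcnt_nest_add (c h : ℕ) (q r : DyckWord) :
    dcnt c h ((q.nest + r).toList)
      = (if (h + 1) % 3 = c then 1 else 0) + dcnt c (h + 1) q.toList + dcnt c h r.toList := by
  rw [toList_add, toList_nest]
  have : ([U] ++ q.toList ++ [D]) ++ r.toList = U :: (q.toList ++ (D :: r.toList)) := by simp
  rw [this]
  simp only [dcnt]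
  rw [dcnt_append c q.toList (D :: r.toList) (h + 1), hgt_dyckWord]
  simp only [dcnt]
  rw [show h + 1 - 1 = h by omega]
  ring

lemma dcnt_shift3' (c : ℕ) (w : DyckWord) (h : ℕ) :
    dcnt c (h + 3) w.toList = dcnt c h w.toList :=
  dcnt_shift3 c w.toList h (ok_of_dyckWord w h)

/-! ### generating polynomials -/

noncomputable def dF (n : ℕ) : Finset DyckWord :=
  Finset.univ.image (Subtype.val : {w : DyckWord // w.semilength = n} → DyckWord)

lemma mem_dF {w : DyckWord} {n : ℕ} : w ∈ dF n ↔ w.semilength = n := by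
  simp [dF]

lemma semilength_eq_zero {w : DyckWord} (h : w.semilength = 0) : w = 0 := by
  have h2 := DyckWord.two_mul_semilength_eq_length (p := w)
  rw [h] at h2
  have : w.toList = [] := List.length_eq_zero_iff.mp (by omega)
  exact DyckWord.toList_eq_nil.mp this

lemma dF_zero : dF 0 = {0} := by
  ext w
  simp only [mem_dF, Finset.mem_singleton]
  exact ⟨semilength_eq_zero, by rintro rfl; rfl⟩

noncomputable def Q (lev n : ℕ) : Polynomial ℤ :=
  ∑ w ∈ dF n, (Polynomial.X : Polynomial ℤ) ^ (dcnt 0 lev w.toList)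

lemma Q_zero (lev : ℕ) : Q lev 0 = 1 := by
  rw [Q, dF_zero]
  have : (0 : DyckWord).toList = [] := rfl
  simp [this, dcnt]

lemma Q_succ (lev n : ℕ) : Q lev (n + 1) =
    ∑ ij ∈ Finset.HasAntidiagonal.antidiagonal n,
      (Polynomial.X : Polynomial ℤ) ^ (if (lev + 1) % 3 = 0 then 1 else 0)
        * Q (lev + 1) ij.1 * Q lev ij.2 := by
  have hrw : ∀ ij : ℕ × ℕ,
      (Polynomial.X : Polynomial ℤ) ^ (if (lev + 1) % 3 = 0 then 1 else 0)
        * Q (lev + 1) ij.1 * Q lev ij.2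
      = ∑ x ∈ dF ij.1 ×ˢ dF ij.2,
          (Polynomial.X : Polynomial ℤ) ^
            ((if (lev + 1) % 3 = 0 then 1 else 0) + dcnt 0 (lev + 1) x.1.toList
              + dcnt 0 lev x.2.toList) := by
    intro ij
    rw [Finset.sum_product]
    simp only [Q, Finset.mul_sum, Finset.sum_mul, pow_add, mul_assoc]
    rw [Finset.sum_comm]
  simp only [hrw]
  rw [Finset.sum_sigma', Q]
  refine Finset.sum_nbij'
    (fun w => (⟨(w.insidePart.semilength, w.outsidePart.semilength),
                    (w.insidePart, w.outsidePart)⟩ : (_ : ℕ × ℕ) × DyckWord × DyckWord))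
    (fun x => x.2.1.nest + x.2.2) ?_ ?_ ?_ ?_ ?_
  · intro w hw
    rw [mem_dF] at hw
    have hne : w ≠ 0 := by
      intro h; rw [h] at hw; simp at hw
    simp only [Finset.mem_sigma, Finset.HasAntidiagonal.mem_antidiagonal, Finset.mem_product, mem_dF]
    refine ⟨?_, trivial, trivial⟩
    have := DyckWord.semilength_insidePart_add_semilength_outsidePart_add_one hne
    omega
  · rintro ⟨⟨i1, i2⟩, q, r⟩ hx
    simp only [Finset.mem_sigma, Finset.HasAntidiagonal.mem_antidiagonal, Finset.mem_product, mem_dF] at hx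
    obtain ⟨hsum, hq, hr⟩ := hx
    rw [mem_dF, DyckWord.semilength_add, DyckWord.semilength_nest, hq, hr]
    omega
  · intro w hw
    rw [mem_dF] at hw
    have hne : w ≠ 0 := by
      intro h; rw [h] at hw; simp at hw
    have hd := DyckWord.nest_insidePart_add_outsidePart hne
    simp only [hd]
  · rintro ⟨⟨i1, i2⟩, q, r⟩ hx
    simp only [Finset.mem_sigma, Finset.HasAntidiagonal.mem_antidiagonal, Finset.mem_product, mem_dF] at hx
    obtain ⟨hsum, hq, hr⟩ := hx
    have h1 : (q.nest + r).insidePart = q := by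
      rw [DyckWord.insidePart_add DyckWord.nest_ne_zero, DyckWord.insidePart_nest]
    have h2 : (q.nest + r).outsidePart = r := by
      rw [DyckWord.outsidePart_add DyckWord.nest_ne_zero, DyckWord.outsidePart_nest, zero_add]
    subst hq hr
    simp only [h1, h2]
  · intro w hw
    rw [mem_dF] at hw
    have hne : w ≠ 0 := by
      intro h; rw [h] at hw; simp at hw
    have hd := DyckWord.nest_insidePart_add_outsidePart hne
    conv_lhs => rw [← hd]
    rw [dcnt_nest_add]

lemma Q_three (n : ℕ) : Q 3 n = Q 0 n := by
  rw [Q, Q]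
  exact Finset.sum_congr rfl fun w _ => by
    rw [show (3 : ℕ) = 0 + 3 by rfl, dcnt_shift3']

/-! ### power series algebra -/

noncomputable abbrev S := PowerSeries (Polynomial ℤ)
noncomputable def t : S := PowerSeries.X
noncomputable def xx : S := PowerSeries.C (Polynomial.X : Polynomial ℤ)
noncomputable def su : S := PowerSeries.mk fun n => Q 0 n
noncomputable def sv : S := PowerSeries.mk fun n => Q 1 n
noncomputable def sw : S := PowerSeries.mk fun n => Q 2 n

lemma coeff_mk (f : ℕ → Polynomial ℤ) (n : ℕ) : PowerSeries.coeff n (PowerSeries.mk f) = f n :=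
  PowerSeries.coeff_mk n f

lemma E_aux (lev : ℕ) (a b : S) (ha : a = PowerSeries.mk fun n => Q (lev + 1) n)
    (hb : b = PowerSeries.mk fun n => Q lev n) :
    b = 1 + t * (xx ^ (if (lev + 1) % 3 = 0 then 1 else 0) * a * b) := by
  apply PowerSeries.ext
  intro n
  cases n with
  | zero =>
    simp only [hb, coeff_mk, Q_zero, map_add, t]
    rw [PowerSeries.coeff_zero_eq_constantCoeff_apply]
    simp only [map_add, map_one, map_mul, PowerSeries.constantCoeff_X, zero_mul, add_zero]
    split <;> simp [map_mul, PowerSeries.constantCoeff_X]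
  | succ n =>
    rw [hb, coeff_mk, Q_succ, map_add, t, PowerSeries.coeff_succ_X_mul]
    have hzero : (PowerSeries.coeff (R := Polynomial ℤ) (n+1)) 1 = 0 := by
      rw [PowerSeries.coeff_one]; simp
    rw [hzero, zero_add, PowerSeries.coeff_mul]
    apply Finset.sum_congr rfl
    rintro ⟨i1, i2⟩ hx
    have hc : PowerSeries.coeff (R := Polynomial ℤ) i1 (xx ^ (if (lev + 1) % 3 = 0 then 1 else 0) * a)
        = Polynomial.X ^ (if (lev + 1) % 3 = 0 then 1 else 0) * Q (lev + 1) i1 := by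
      rw [ha, xx]
      split <;> simp [PowerSeries.coeff_C_mul, coeff_mk]
    rw [hc, coeff_mk]

lemma E0 : su = 1 + t * (sv * su) := by
  have := E_aux 0 sv su rfl rfl
  simpa using this

lemma E1 : sv = 1 + t * (sw * sv) := by
  have := E_aux 1 sw sv rfl rfl
  simpa using this

lemma E2' : sw = 1 + t * (xx * su * sw) := by
  have h3 : (PowerSeries.mk fun n => Q 3 n) = su := by
    apply PowerSeries.ext; intro n; rw [coeff_mk, Q_three, su, coeff_mk]
  have h2 : sw = 1 + t * (xx ^ (if (2 + 1) % 3 = 0 then 1 else 0)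
      * (PowerSeries.mk fun n => Q 3 n) * sw) := E_aux 2 (PowerSeries.mk fun n => Q 3 n) sw rfl rfl
  rw [h3] at h2
  simpa using h2

lemma StepA : sv * (1 - t - t * xx * su) = 1 - t * xx * su := by
  linear_combination (1 - t * xx * su) * E1 + t * sv * E2'

lemma StepB : su * (1 - 2 * t + t * xx) = (1 - t) + t * xx * (1 - t) * su ^ 2 := by
  linear_combination t * su * StepA + (1 - t - t * xx * su) * E0

lemma StepC : ((1 - t) * xx * su - (xx - 1)) * (1 - t - t * xx * su)
    = (1 - t) * (1 - t * xx * su) := by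
  linear_combination xx * StepB

lemma MAIN : (1 - t) * sv = (1 - t) * xx * su - (xx - 1) := by
  have hfac : ((1 - t) * sv - ((1 - t) * xx * su - (xx - 1))) * (1 - t - t * xx * su) = 0 := by
    linear_combination (1 - t) * StepA - StepC
  have hM : (1 - t - t * xx * su) ≠ 0 := by
    intro h
    have := congrArg (PowerSeries.constantCoeff (R := Polynomial ℤ)) h
    simp only [map_sub, map_mul, map_one, t, xx, PowerSeries.constantCoeff_X,
      PowerSeries.constantCoeff_C, zero_mul, mul_zero, map_zero, sub_zero, mul_comm] at this
    simp at this
  rcases mul_eq_zero.mp hfac with h | h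
  · exact sub_eq_zero.mp h
  · exact absurd h hM

lemma perN : ∀ n : ℕ, Polynomial.X * Q 0 n - Q 1 n = Polynomial.X - 1 := by
  intro n
  induction n with
  | zero => rw [Q_zero, Q_zero]; ring
  | succ n ih =>
    have hc := congrArg (PowerSeries.coeff (R := Polynomial ℤ) (n + 1)) MAIN
    have expand : ∀ f : S, PowerSeries.coeff (R := Polynomial ℤ) (n+1) ((1 - t) * f)
        = PowerSeries.coeff (n+1) f - PowerSeries.coeff n f := by
      intro f
      rw [sub_mul, one_mul, map_sub, t, PowerSeries.coeff_succ_X_mul]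
    rw [expand, map_sub] at hc
    rw [show (1 - t) * xx * su = (1-t) * (xx * su) by ring, expand] at hc
    have hxsu : ∀ m : ℕ, PowerSeries.coeff (R := Polynomial ℤ) m (xx * su)
        = Polynomial.X * Q 0 m := by
      intro m; rw [xx, su, PowerSeries.coeff_C_mul, PowerSeries.coeff_mk]
    have hconst : PowerSeries.coeff (R := Polynomial ℤ) (n+1) ((xx : S) - 1) = 0 := by
      rw [map_sub, xx, PowerSeries.coeff_C, PowerSeries.coeff_one]
      simp
    rw [hxsu, hxsu, hconst, sv, coeff_mk, coeff_mk] at hc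
    linear_combination ih - hc

/-! ### counting -/

lemma Q_coeff (lev n k : ℕ) :
    (Q lev n).coeff k = (((dF n).filter (fun w => dcnt 0 lev w.toList = k)).card : ℤ) := by
  rw [Q, Polynomial.finset_sum_coeff]
  simp only [Polynomial.coeff_X_pow]
  rw [Finset.sum_boole]
  have hfil : (dF n).filter (fun x => k = dcnt 0 lev x.toList)
      = (dF n).filter (fun w => dcnt 0 lev w.toList = k) :=
    Finset.filter_congr fun w _ => eq_comm
  rw [hfil]

lemma card_eq (n k c lev : ℕ)
    (hstat : ∀ p : List Bool, (∀ i, (p.take i).count false ≤ (p.take i).count true) →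
       upStepsMod 3 c p = dcnt 0 lev (p.map toStep)) :
    Nat.card {p : List Bool // IsDyckPath n p ∧ upStepsMod 3 c p = k}
      = ((dF n).filter (fun w => dcnt 0 lev w.toList = k)).card := by
  rw [← Nat.card_eq_finsetCard]
  apply Nat.card_congr
  refine ⟨fun x => ⟨⟨x.1.map toStep, ?_, ?_⟩, ?_⟩, fun y => ⟨y.1.toList.map toBool, ?_, ?_⟩, ?_, ?_⟩
  · obtain ⟨p, ⟨hlen, hct, hpre⟩, hs⟩ := x
    have := count_true_add_count_false p
    show (List.map toStep p).count U = (List.map toStep p).count D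
    rw [count_U_map, count_D_map]
    omega
  · obtain ⟨p, ⟨hlen, hct, hpre⟩, hs⟩ := x
    intro i
    rw [← List.map_take, count_U_map, count_D_map]
    exact hpre i
  · obtain ⟨p, ⟨hlen, hct, hpre⟩, hs⟩ := x
    rw [Finset.mem_filter, mem_dF]
    constructor
    · show (p.map toStep).count U = n
      rw [count_U_map]; exact hct
    · show dcnt 0 lev (p.map toStep) = k
      rw [← hstat p hpre]; exact hs
  · obtain ⟨w, hw⟩ := y
    rw [Finset.mem_filter, mem_dF] at hw
    obtain ⟨hsl, hst⟩ := hw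
    have hmsb := map_toStep_toBool w.toList
    have hlen : (w.toList.map toBool).length = 2 * n := by
      have := DyckWord.two_mul_semilength_eq_length (p := w)
      rw [hsl] at this
      simp [this.symm]
    have hct : (w.toList.map toBool).count true = n := by
      have := count_U_map (w.toList.map toBool)
      rw [hmsb] at this
      rw [← this]
      exact hsl
    refine ⟨hlen, hct, ?_⟩
    · intro i
      have h1 := count_U_map ((w.toList.map toBool).take i)
      have h2 := count_D_map ((w.toList.map toBool).take i)
      rw [List.map_take, hmsb] at h1 h2
      rw [← h1, ← h2]
      exact w.count_D_le_count_U i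
  · obtain ⟨w, hw⟩ := y
    rw [Finset.mem_filter, mem_dF] at hw
    obtain ⟨hsl, hst⟩ := hw
    have hpre : ∀ i, ((w.toList.map toBool).take i).count false ≤ ((w.toList.map toBool).take i).count true := by
      intro i
      have h1 := count_U_map ((w.toList.map toBool).take i)
      have h2 := count_D_map ((w.toList.map toBool).take i)
      rw [List.map_take, map_toStep_toBool] at h1 h2
      rw [← h1, ← h2]
      exact w.count_D_le_count_U i
    rw [hstat _ hpre, map_toStep_toBool]
    exact hst
  · intro x
    apply Subtype.ext
    exact map_toBool_toStep x.1
  · intro y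
    apply Subtype.ext
    apply DyckWord.ext
    exact map_toStep_toBool y.1.toList

lemma hstat0 : ∀ p : List Bool, (∀ i, (p.take i).count false ≤ (p.take i).count true) →
    upStepsMod 3 0 p = dcnt 0 0 (p.map toStep) := by
  intro p hpre
  rw [upStepsMod_eq_bcnt 0 p hpre, bcnt_eq_dcnt]

lemma hstat2 : ∀ p : List Bool, (∀ i, (p.take i).count false ≤ (p.take i).count true) →
    upStepsMod 3 2 p = dcnt 0 1 (p.map toStep) := by
  intro p hpre
  rw [upStepsMod_eq_bcnt 2 p hpre, bcnt_eq_dcnt]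
  have hok : Ok 0 (p.map toStep) := by
    intro i
    rw [← List.map_take, count_U_map, count_D_map]
    simpa using hpre i
  rw [dcnt_two_shift (p.map toStep) 0 hok]

end DyckAux

/-- The number of Dyck paths of semilength `n` with exactly `k` up steps at height
`h ≡ 0 (mod 3)` equals the number of Dyck paths of semilength `n` with exactly `k+1`
up steps at height `h ≡ 2 (mod 3)`. -/
theorem upSteps_mod_three_shift (n k : ℕ) (hn : 1 ≤ n) (hk : 1 ≤ k) :
    Nat.card {p : List Bool // IsDyckPath n p ∧ upStepsMod 3 0 p = k} =
      Nat.card {p : List Bool // IsDyckPath n p ∧ upStepsMod 3 2 p = k + 1} := by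
  rw [DyckAux.card_eq n k 0 0 DyckAux.hstat0, DyckAux.card_eq n (k+1) 2 1 DyckAux.hstat2]
  have hq : (DyckAux.Q 0 n).coeff k = (DyckAux.Q 1 n).coeff (k + 1) := by
    have h := DyckAux.perN n
    have hc := congrArg (fun q => Polynomial.coeff q (k + 1)) h
    simp only [Polynomial.coeff_sub, Polynomial.coeff_X_mul] at hc
    have hx : (Polynomial.X : Polynomial ℤ).coeff (k + 1) = 0 := by
      rw [Polynomial.coeff_X]
      simp only [ite_eq_right_iff]
      omega
    have h1 : (1 : Polynomial ℤ).coeff (k + 1) = 0 := by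
      rw [Polynomial.coeff_one]
      simp only [ite_eq_right_iff]
      omega
    rw [hx, h1] at hc
    linarith
  rw [DyckAux.Q_coeff, DyckAux.Q_coeff] at hq
  exact_mod_cast hq
end

section
/- For every m ≥ 2, n ≥ 1 and k ≥ 1, the number of Dyck paths of semilength n with exactly k up steps at height h ≡ 0 (mod m) equals the number of Dyck paths of semilength n with exactly k+1 up steps at height h ≡ m-1 (mod m). -/
namespace DyckShift

def sv (b : Bool) : ℤ := if b then 1 else -1

def hsum (p : List Bool) : ℤ := (p.map sv).sum

@[simp] lemma hsum_nil : hsum [] = 0 := rfl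

@[simp] lemma hsum_cons (b : Bool) (t : List Bool) : hsum (b :: t) = sv b + hsum t := by
  simp [hsum]

@[simp] lemma hsum_append (a b : List Bool) : hsum (a ++ b) = hsum a + hsum b := by
  simp [hsum]

@[simp] lemma hsum_reverse (l : List Bool) : hsum l.reverse = hsum l := by
  simp [hsum, List.sum_reverse]

@[simp] lemma hsum_singleton (b : Bool) : hsum [b] = sv b := by simp [hsum]

lemma sv_le_one (b : Bool) : sv b ≤ 1 := by cases b <;> simp [sv]

lemma neg_one_le_sv (b : Bool) : -1 ≤ sv b := by cases b <;> simp [sv]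

lemma hsum_eq_counts (l : List Bool) :
    hsum l = (l.count true : ℤ) - (l.count false : ℤ) := by
  induction l with
  | nil => simp
  | cons b t ih =>
    cases b <;> simp [ih, sv, List.count_cons] <;> ring

lemma hsum_drop (c : List Bool) (j : ℕ) :
    hsum (c.drop j) = hsum c - hsum (c.take j) := by
  have := hsum_append (c.take j) (c.drop j)
  rw [List.take_append_drop] at this
  linarith

lemma hsum_take_append (a b : List Bool) (i : ℕ) :
    hsum ((a ++ b).take i) = hsum (a.take i) + hsum (b.take (i - a.length)) := by
  rw [List.take_append, hsum_append]

lemma hsum_take_of_ge {a : List Bool} {i : ℕ} (h : a.length ≤ i) :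
    hsum (a.take i) = hsum a := by rw [List.take_of_length_le h]

lemma hsum_take_reverse (c : List Bool) (i : ℕ) :
    hsum (c.reverse.take i) = hsum c - hsum (c.take (c.length - i)) := by
  rw [List.take_reverse, hsum_reverse, hsum_drop]

lemma hsum_take_succ_le (q : List Bool) (i : ℕ) :
    hsum (q.take (i + 1)) ≤ hsum (q.take i) + 1 := by
  rw [List.take_succ, hsum_append]
  rcases h : q[i]? with _ | b
  · simp
  · simpa using sv_le_one b

lemma hsum_take_succ_ge (q : List Bool) (i : ℕ) :
    hsum (q.take i) - 1 ≤ hsum (q.take (i + 1)) := by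
  rw [List.take_succ, hsum_append]
  rcases h : q[i]? with _ | b
  · simp
  · have := neg_one_le_sv b; simp; linarith

/-- Discrete intermediate value theorem, upcrossing version. -/
lemma ivt_up (X : ℕ → ℤ) (hstep : ∀ j, X (j + 1) ≤ X j + 1) (V : ℤ) :
    ∀ j₂ j₁, j₁ ≤ j₂ → X j₁ ≤ V → V ≤ X j₂ →
      ∃ j, j₁ ≤ j ∧ j ≤ j₂ ∧ X j = V := by
  intro j₂
  induction j₂ with
  | zero =>
    intro j₁ h1 h2 h3
    have hz : j₁ = 0 := Nat.le_zero.mp h1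
    subst hz
    exact ⟨0, le_refl _, le_refl _, le_antisymm h2 h3⟩
  | succ n ih =>
    intro j₁ h1 h2 h3
    rcases Nat.eq_or_lt_of_le h1 with rfl | hlt
    · exact ⟨_, le_refl _, le_refl _, le_antisymm h2 h3⟩
    · have h1' : j₁ ≤ n := Nat.lt_succ_iff.mp hlt
      by_cases hV : V ≤ X n
      · obtain ⟨j, hj1, hj2, hj3⟩ := ih j₁ h1' h2 hV
        exact ⟨j, hj1, Nat.le_succ_of_le hj2, hj3⟩
      · push_neg at hV
        have := hstep n
        exact ⟨n + 1, hlt.le, le_refl _, by omega⟩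

/-- Discrete intermediate value theorem, downcrossing version. -/
lemma ivt_down (X : ℕ → ℤ) (hstep : ∀ j, X j - 1 ≤ X (j + 1)) (V : ℤ)
    (j₂ j₁ : ℕ) (h1 : j₁ ≤ j₂) (h2 : V ≤ X j₁) (h3 : X j₂ ≤ V) :
    ∃ j, j₁ ≤ j ∧ j ≤ j₂ ∧ X j = V := by
  obtain ⟨j, hj1, hj2, hj3⟩ := ivt_up (fun j => -X j)
    (fun j => by have := hstep j; omega)
    (-V) j₂ j₁ h1 (by omega) (by omega)
  have h4 : -X j = -V := hj3
  exact ⟨j, hj1, hj2, by omega⟩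

/-- Count of up steps in `q` (starting at height `h`) whose landing height is `≡ c mod m`. -/
def cnt (m : ℕ) (c : ℤ) : ℤ → List Bool → ℕ
  | _, [] => 0
  | h, b :: t =>
    (if b = true ∧ (h + sv b) % (m : ℤ) = c then 1 else 0) + cnt m c (h + sv b) t

lemma cnt_append (m : ℕ) (c : ℤ) (a : List Bool) :
    ∀ h b, cnt m c h (a ++ b) = cnt m c h a + cnt m c (h + hsum a) b := by
  induction a with
  | nil => intro h b; simp [cnt]
  | cons x t ih =>
    intro h b
    simp only [List.cons_append, cnt, hsum_cons, List.append_eq]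
    rw [ih, add_assoc]
    omega

lemma cnt_eq_card (m : ℕ) (c : ℤ) :
    ∀ (q : List Bool) (h : ℤ), cnt m c h q =
      ((Finset.range q.length).filter
        (fun i => q.getD i false = true ∧ (h + hsum (q.take (i + 1))) % (m : ℤ) = c)).card := by
  intro q
  induction q with
  | nil => intro h; simp [cnt]
  | cons b t ih =>
    intro h
    rw [Finset.card_filter]
    rw [List.length_cons, Finset.sum_range_succ']
    have e0 : ((b :: t).getD 0 false = true ∧ (h + hsum ((b :: t).take (0 + 1))) % (m : ℤ) = c)
        ↔ (b = true ∧ (h + sv b) % (m : ℤ) = c) := by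
      simp
    have e1 : ∀ i, ((b :: t).getD (i + 1) false = true ∧
        (h + hsum ((b :: t).take (i + 1 + 1))) % (m : ℤ) = c)
        ↔ (t.getD i false = true ∧ ((h + sv b) + hsum (t.take (i + 1))) % (m : ℤ) = c) := by
      intro i
      simp [List.take_succ_cons, add_assoc]
    simp only [cnt, ih (h + sv b), Finset.card_filter]
    rw [add_comm]
    congr 1
    · apply Finset.sum_congr rfl
      intro i _
      congr 1
      simp only [e1]
    · simp only [e0]

lemma count_true_add_count_false (l : List Bool) : l.count true + l.count false = l.length := by
  induction l with
  | nil => simp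
  | cons b t ih => cases b <;> simp [List.count_cons] <;> omega

/-- Bridge between the `ℕ`-valued statistic and `cnt`. -/
lemma upStepsMod_eq_cnt (m c : ℕ) (p : List Bool)
    (hnn : ∀ i, (p.take i).count false ≤ (p.take i).count true) :
    upStepsMod m c p = cnt m (c : ℤ) 0 p := by
  rw [upStepsMod, cnt_eq_card]
  congr 1
  apply Finset.filter_congr
  intro i _
  have hle := hnn (i + 1)
  have hsh : ((stepHeight p i : ℕ) : ℤ) = 0 + hsum (p.take (i + 1)) := by
    rw [stepHeight, hsum_eq_counts]
    push_cast [hle]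
    ring
  constructor
  · rintro ⟨h1, h2⟩
    refine ⟨h1, ?_⟩
    rw [← hsh]
    exact_mod_cast h2
  · rintro ⟨h1, h2⟩
    refine ⟨h1, ?_⟩
    rw [← hsh] at h2
    exact_mod_cast h2

/-! ### Modular arithmetic helpers -/

lemma emod_decomp {x r M : ℤ} (h : x % M = r) : ∃ k, x = M * k + r :=
  ⟨x / M, by rw [← h]; exact (Int.mul_ediv_add_emod x M).symm⟩

lemma emod_build {M k r : ℤ} (h0 : 0 ≤ r) (h1 : r < M) : (M * k + r) % M = r := by
  rw [add_comm, Int.add_mul_emod_self_left, Int.emod_eq_of_lt h0 h1]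

lemma vis_arith {M : ℤ} (hM : 0 < M) {A B X : ℤ} (hA : A % M = M - 1) (hB : B % M = M - 1) :
    ((A + B - X) % M = M - 1 ↔ X % M = M - 1) := by
  obtain ⟨ka, ha⟩ := emod_decomp hA
  obtain ⟨kb, hb⟩ := emod_decomp hB
  constructor
  · intro h
    obtain ⟨kc, hc⟩ := emod_decomp h
    have hX : X = M * (ka + kb - kc) + (M - 1) := by linear_combination ha + hb - hc
    rw [hX]; exact emod_build (by omega) (by omega)
  · intro h
    obtain ⟨kc, hc⟩ := emod_decomp h
    have hX : A + B - X = M * (ka + kb - kc) + (M - 1) := by linear_combination ha + hb - hc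
    rw [hX]; exact emod_build (by omega) (by omega)

lemma vis_add_one {M h : ℤ} (hM : 0 < M) : (h + 1) % M = 0 ↔ h % M = M - 1 := by
  constructor
  · intro hh
    obtain ⟨k, hk⟩ := emod_decomp hh
    have hX : h = M * (k - 1) + (M - 1) := by linear_combination hk
    rw [hX]; exact emod_build (by omega) (by omega)
  · intro hh
    obtain ⟨k, hk⟩ := emod_decomp hh
    have hX : h + 1 = M * (k + 1) + 0 := by linear_combination hk
    rw [hX]; exact emod_build (by omega) hM

lemma vis_add_M {M h : ℤ} : (h + M) % M = h % M := by
  simpa using Int.add_mul_emod_self_left (a := h) (b := M) (c := 1)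

lemma vis_ge {M h : ℤ} (hM : 0 < M) (hv : h % M = M - 1) (h0 : 0 ≤ h) : M - 1 ≤ h := by
  obtain ⟨k, hk⟩ := emod_decomp hv
  rcases le_or_gt 0 k with hk0 | hk0
  · nlinarith
  · nlinarith

/-! ### Chunks -/

def chunks (m : ℕ) : ℤ → List Bool → List (List Bool)
  | _, [] => [[]]
  | h, b :: t =>
    if (h + sv b) % (m : ℤ) = (m : ℤ) - 1 then
      [b] :: chunks m (h + sv b) t
    else
      List.modifyHead (List.cons b) (chunks m (h + sv b) t)

lemma chunks_nil (m : ℕ) (h : ℤ) : chunks m h [] = [[]] := rfl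

lemma chunks_cons_vis {m : ℕ} {h : ℤ} {b : Bool} (t : List Bool)
    (hv : (h + sv b) % (m : ℤ) = (m : ℤ) - 1) :
    chunks m h (b :: t) = [b] :: chunks m (h + sv b) t := by
  simp only [chunks, if_pos hv]

lemma chunks_cons_nonvis {m : ℕ} {h : ℤ} {b : Bool} (t : List Bool)
    (hv : ¬ (h + sv b) % (m : ℤ) = (m : ℤ) - 1) :
    chunks m h (b :: t) = List.modifyHead (List.cons b) (chunks m (h + sv b) t) := by
  simp only [chunks, if_neg hv]

lemma chunks_ne_nil (m : ℕ) : ∀ (p : List Bool) (h : ℤ), chunks m h p ≠ [] := by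
  intro p
  induction p with
  | nil => intro h; simp [chunks_nil]
  | cons b t ih =>
    intro h
    by_cases hv : (h + sv b) % (m : ℤ) = (m : ℤ) - 1
    · rw [chunks_cons_vis t hv]; simp
    · rw [chunks_cons_nonvis t hv]
      rcases hE : chunks m (h + sv b) t with _ | ⟨c, cs⟩
      · exact absurd hE (ih _)
      · simp

lemma chunks_flatten (m : ℕ) : ∀ (p : List Bool) (h : ℤ), (chunks m h p).flatten = p := by
  intro p
  induction p with
  | nil => intro h; simp [chunks_nil]
  | cons b t ih =>
    intro h
    by_cases hv : (h + sv b) % (m : ℤ) = (m : ℤ) - 1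
    · rw [chunks_cons_vis t hv]
      simp [ih]
    · rw [chunks_cons_nonvis t hv]
      rcases hE : chunks m (h + sv b) t with _ | ⟨c, cs⟩
      · exact absurd hE (chunks_ne_nil m t _)
      · have hF := ih (h + sv b)
        rw [hE] at hF
        rw [List.modifyHead_cons, List.flatten_cons, List.cons_append]
        rw [List.flatten_cons] at hF
        rw [hF]

/-! ### Chunk invariants -/

def SegOK (m : ℕ) (h : ℤ) (c : List Bool) : Prop :=
  c ≠ [] ∧ (h + hsum c) % (m : ℤ) = (m : ℤ) - 1 ∧
    ∀ i, 0 < i → i < c.length → (h + hsum (c.take i)) % (m : ℤ) ≠ (m : ℤ) - 1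

def TailOK (m : ℕ) (h : ℤ) (c : List Bool) : Prop :=
  ∀ i, 0 < i → i ≤ c.length → (h + hsum (c.take i)) % (m : ℤ) ≠ (m : ℤ) - 1

def ChainOK (m : ℕ) : ℤ → List (List Bool) → Prop
  | _, [] => False
  | h, [t] => TailOK m h t
  | h, c :: cs => SegOK m h c ∧ ChainOK m (h + hsum c) cs

@[simp] lemma ChainOK_singleton {m : ℕ} {h : ℤ} {t : List Bool} :
    ChainOK m h [t] ↔ TailOK m h t := by
  simp [ChainOK]

lemma ChainOK_cons₂ {m : ℕ} {h : ℤ} {c c' : List Bool} {cs : List (List Bool)} :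
    ChainOK m h (c :: c' :: cs) ↔ SegOK m h c ∧ ChainOK m (h + hsum c) (c' :: cs) := by
  simp [ChainOK]

lemma chunks_chain (m : ℕ) : ∀ (p : List Bool) (h : ℤ), ChainOK m h (chunks m h p) := by
  intro p
  induction p with
  | nil =>
    intro h
    rw [chunks_nil]
    rw [ChainOK_singleton]
    intro i hi hle
    simp at hle
    omega
  | cons b t ih =>
    intro h
    by_cases hv : (h + sv b) % (m : ℤ) = (m : ℤ) - 1
    · rw [chunks_cons_vis t hv]
      rcases hE : chunks m (h + sv b) t with _ | ⟨c, cs⟩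
      · exact absurd hE (chunks_ne_nil m t _)
      · rw [ChainOK_cons₂]
        constructor
        · refine ⟨by simp, by simpa using hv, ?_⟩
          intro i hi hlt
          simp at hlt
          omega
        · have := ih (h + sv b)
          rw [hE] at this
          simpa using this
    · rw [chunks_cons_nonvis t hv]
      rcases hE : chunks m (h + sv b) t with _ | ⟨c, cs⟩
      · exact absurd hE (chunks_ne_nil m t _)
      · have ihc := ih (h + sv b)
        rw [hE] at ihc
        rw [List.modifyHead_cons]
        rcases cs with _ | ⟨c', cs'⟩
        · -- tail case
          rw [ChainOK_singleton] at ihc ⊢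
          intro i hi hle
          obtain ⟨j, rfl⟩ : ∃ j, i = j + 1 := ⟨i - 1, by omega⟩
          rw [List.take_succ_cons, hsum_cons, ← add_assoc]
          rcases Nat.eq_zero_or_pos j with rfl | hj
          · simpa using hv
          · exact ihc j hj (by simpa using hle)
        · rw [ChainOK_cons₂] at ihc ⊢
          obtain ⟨⟨hne, hend, hint⟩, hch⟩ := ihc
          refine ⟨⟨by simp, ?_, ?_⟩, ?_⟩
          · rw [hsum_cons, ← add_assoc]; exact hend
          · intro i hi hlt
            obtain ⟨j, rfl⟩ : ∃ j, i = j + 1 := ⟨i - 1, by omega⟩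
            rw [List.take_succ_cons, hsum_cons, ← add_assoc]
            rcases Nat.eq_zero_or_pos j with rfl | hj
            · simpa using hv
            · exact hint j hj (by simpa using hlt)
          · rw [hsum_cons, ← add_assoc]; exact hch

/-! ### Uniqueness of chunk decompositions -/

lemma chunks_of_tail {m : ℕ} : ∀ (t : List Bool) (h : ℤ), TailOK m h t → chunks m h t = [t] := by
  intro t
  induction t with
  | nil => intro h _; rfl
  | cons b t' ih =>
    intro h hT
    have hv : ¬ (h + sv b) % (m : ℤ) = (m : ℤ) - 1 := by
      have := hT 1 (by omega) (by simp)
      simpa using this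
    rw [chunks_cons_nonvis t' hv]
    have hT' : TailOK m (h + sv b) t' := by
      intro i hi hle
      have := hT (i + 1) (by omega) (by simp; omega)
      rw [List.take_succ_cons, hsum_cons, ← add_assoc] at this
      exact this
    rw [ih _ hT', List.modifyHead_cons]

lemma chunks_of_seg {m : ℕ} : ∀ (c : List Bool) (h : ℤ), SegOK m h c →
    ∀ r, chunks m h (c ++ r) = c :: chunks m (h + hsum c) r := by
  intro c
  induction c with
  | nil => intro h hS; exact absurd rfl hS.1
  | cons b c' ih =>
    intro h hS r
    obtain ⟨hne, hend, hint⟩ := hS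
    rcases c' with _ | ⟨x, xs⟩
    · -- c = [b]
      have hv : (h + sv b) % (m : ℤ) = (m : ℤ) - 1 := by simpa using hend
      rw [List.cons_append, List.nil_append, chunks_cons_vis r hv]
      simp
    · -- c' nonempty
      have hv : ¬ (h + sv b) % (m : ℤ) = (m : ℤ) - 1 := by
        have := hint 1 (by omega) (by simp)
        simpa using this
      have hS' : SegOK m (h + sv b) (x :: xs) := by
        refine ⟨by simp, ?_, ?_⟩
        · rw [hsum_cons, ← add_assoc] at hend; exact hend
        · intro i hi hlt
          have := hint (i + 1) (by omega) (by simp at hlt ⊢; omega)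
          rw [List.take_succ_cons, hsum_cons, ← add_assoc] at this
          exact this
      rw [List.cons_append, chunks_cons_nonvis _ hv, ih _ hS' r, List.modifyHead_cons]
      have harr : h + sv b + hsum (x :: xs) = h + hsum (b :: x :: xs) := by
        simp [hsum_cons]; ring
      rw [harr]

lemma chunks_eq_of_chain {m : ℕ} : ∀ (cs : List (List Bool)) (h : ℤ), ChainOK m h cs →
    chunks m h cs.flatten = cs := by
  intro cs
  induction cs with
  | nil => intro h hc; exact absurd hc (by simp [ChainOK])
  | cons c cs ih =>
    intro h hc
    rcases cs with _ | ⟨c', cs'⟩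
    · rw [ChainOK_singleton] at hc
      simpa using chunks_of_tail c h hc
    · rw [ChainOK_cons₂] at hc
      rw [List.flatten_cons, chunks_of_seg c h hc.1, ih _ hc.2]

/-! ### midrev : reverse all chunks except the first and the last -/

def midrev : List (List Bool) → List (List Bool)
  | [] => []
  | [t] => [t]
  | c :: cs => c.reverse :: midrev cs

@[simp] lemma midrev_nil : midrev [] = [] := rfl

@[simp] lemma midrev_singleton (t : List Bool) : midrev [t] = [t] := rfl

lemma midrev_cons {c : List Bool} {cs : List (List Bool)} (h : cs ≠ []) :
    midrev (c :: cs) = c.reverse :: midrev cs := by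
  rcases cs with _ | ⟨c', cs'⟩
  · exact absurd rfl h
  · rfl

lemma midrev_ne_nil {cs : List (List Bool)} (h : cs ≠ []) : midrev cs ≠ [] := by
  rcases cs with _ | ⟨c, cs⟩
  · exact absurd rfl h
  · rcases cs with _ | ⟨c', cs'⟩ <;> simp [midrev]

lemma midrev_midrev : ∀ cs : List (List Bool), midrev (midrev cs) = cs := by
  intro cs
  induction cs with
  | nil => rfl
  | cons c cs ih =>
    rcases cs with _ | ⟨c', cs'⟩
    · rfl
    · rw [midrev_cons (by simp), midrev_cons (midrev_ne_nil (by simp)), List.reverse_reverse]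
      congr 1

lemma midrev_flatten_count (x : Bool) :
    ∀ cs : List (List Bool), ((midrev cs).flatten).count x = (cs.flatten).count x := by
  intro cs
  induction cs with
  | nil => rfl
  | cons c cs ih =>
    rcases cs with _ | ⟨c', cs'⟩
    · rfl
    · rw [midrev_cons (by simp), List.flatten_cons, List.flatten_cons,
        List.count_append, List.count_append, List.count_reverse]
      congr 1

lemma midrev_flatten_length :
    ∀ cs : List (List Bool), ((midrev cs).flatten).length = (cs.flatten).length := by
  intro cs
  induction cs with
  | nil => rfl
  | cons c cs ih =>
    rcases cs with _ | ⟨c', cs'⟩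
    · rfl
    · rw [midrev_cons (by simp), List.flatten_cons, List.flatten_cons,
        List.length_append, List.length_append, List.length_reverse]
      congr 1

/-! ### Reversing a segment preserves the invariants -/

lemma SegOK_reverse {m : ℕ} (hm : 0 < m) {h : ℤ} {c : List Bool}
    (hv : h % (m : ℤ) = (m : ℤ) - 1) (hS : SegOK m h c) : SegOK m h c.reverse := by
  obtain ⟨hne, hend, hint⟩ := hS
  refine ⟨by simpa using hne, by simpa using hend, ?_⟩
  intro i hi hlt
  rw [List.length_reverse] at hlt
  rw [hsum_take_reverse]
  have key : h + (hsum c - hsum (c.take (c.length - i)))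
      = (h + hsum c) + h - (h + hsum (c.take (c.length - i))) := by ring
  rw [key]
  intro hcontra
  exact hint (c.length - i) (by omega) (by omega)
    ((vis_arith (by exact_mod_cast hm) hend hv).mp hcontra)

lemma ChainOK_midrev {m : ℕ} (hm : 0 < m) :
    ∀ (cs : List (List Bool)) (h : ℤ), ChainOK m h cs → h % (m : ℤ) = (m : ℤ) - 1 →
      ChainOK m h (midrev cs) := by
  intro cs
  induction cs with
  | nil => intro h hc _; exact hc
  | cons c cs ih =>
    intro h hc hv
    rcases cs with _ | ⟨c', cs'⟩
    · exact hc
    · rw [ChainOK_cons₂] at hc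
      rw [midrev_cons (by simp)]
      rcases hmx : midrev (c' :: cs') with _ | ⟨d, ds⟩
      · exact absurd hmx (midrev_ne_nil (by simp))
      · rw [ChainOK_cons₂]
        refine ⟨SegOK_reverse hm hv hc.1, ?_⟩
        rw [hsum_reverse, ← hmx]
        exact ih _ hc.2 hc.1.2.1

/-! ### The involution φ -/

def phi (m : ℕ) (p : List Bool) : List Bool :=
  match chunks m 0 p with
  | [] => p
  | c :: cs => (c :: midrev cs).flatten

lemma phi_eq {m : ℕ} {p c cs} (hE : chunks m 0 p = c :: cs) :
    phi m p = (c :: midrev cs).flatten := by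
  unfold phi
  rw [hE]

lemma chunks_phi {m : ℕ} (hm : 0 < m) {p c cs} (hE : chunks m 0 p = c :: cs) :
    chunks m 0 (phi m p) = c :: midrev cs := by
  rw [phi_eq hE]
  apply chunks_eq_of_chain
  have hch : ChainOK m 0 (c :: cs) := by
    have := chunks_chain m p 0
    rwa [hE] at this
  rcases cs with _ | ⟨c', cs'⟩
  · exact hch
  · rw [ChainOK_cons₂] at hch
    rcases hmx : midrev (c' :: cs') with _ | ⟨d, ds⟩
    · exact absurd hmx (midrev_ne_nil (by simp))
    · rw [ChainOK_cons₂]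
      refine ⟨hch.1, ?_⟩
      rw [← hmx]
      exact ChainOK_midrev hm _ _ hch.2 hch.1.2.1

lemma phi_phi {m : ℕ} (hm : 0 < m) (p : List Bool) : phi m (phi m p) = p := by
  rcases hE : chunks m 0 p with _ | ⟨c, cs⟩
  · exact absurd hE (chunks_ne_nil m p 0)
  · rw [phi_eq (chunks_phi hm hE), midrev_midrev]
    have := chunks_flatten m p 0
    rw [hE] at this
    exact this

lemma phi_count {m : ℕ} (p : List Bool) (x : Bool) : (phi m p).count x = p.count x := by
  rcases hE : chunks m 0 p with _ | ⟨c, cs⟩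
  · exact absurd hE (chunks_ne_nil m p 0)
  · rw [phi_eq hE]
    have hfl := chunks_flatten m p 0
    rw [hE] at hfl
    rw [List.flatten_cons, List.count_append, midrev_flatten_count, ← List.count_append,
      ← List.flatten_cons, hfl]

lemma phi_length {m : ℕ} (p : List Bool) : (phi m p).length = p.length := by
  rcases hE : chunks m 0 p with _ | ⟨c, cs⟩
  · exact absurd hE (chunks_ne_nil m p 0)
  · rw [phi_eq hE]
    have hfl := chunks_flatten m p 0
    rw [hE] at hfl
    rw [List.flatten_cons, List.length_append, midrev_flatten_length, ← List.length_append,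
      ← List.flatten_cons, hfl]

/-! ### Nonnegativity of prefix sums is preserved by φ -/

def PrefNN (h : ℤ) (q : List Bool) : Prop := ∀ i, 0 ≤ h + hsum (q.take i)

lemma prefnn_append {h : ℤ} {a b : List Bool} :
    PrefNN h (a ++ b) ↔ PrefNN h a ∧ PrefNN (h + hsum a) b := by
  constructor
  · intro H
    constructor
    · intro i
      rcases le_or_gt i a.length with hle | hlt
      · have := H i
        rwa [hsum_take_append, Nat.sub_eq_zero_of_le hle, List.take_zero, hsum_nil,
          add_zero] at this
      · rw [hsum_take_of_ge hlt.le]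
        have := H a.length
        rwa [hsum_take_append, Nat.sub_self, List.take_zero, hsum_nil, add_zero,
          hsum_take_of_ge (le_refl _)] at this
    · intro i
      have := H (a.length + i)
      rwa [hsum_take_append, hsum_take_of_ge (by omega), Nat.add_sub_cancel_left,
        ← add_assoc] at this
  · rintro ⟨H1, H2⟩ i
    rw [hsum_take_append]
    rcases le_or_gt i a.length with hle | hlt
    · rw [Nat.sub_eq_zero_of_le hle, List.take_zero, hsum_nil, add_zero]
      exact H1 i
    · rw [hsum_take_of_ge hlt.le, ← add_assoc]
      exact H2 (i - a.length)

lemma seg_rev_nn {m : ℕ} (hm : 2 ≤ m) {h : ℤ} {c : List Bool}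
    (hv : h % (m : ℤ) = (m : ℤ) - 1) (hS : SegOK m h c) (hnn : PrefNN h c) (h0 : 0 ≤ h) :
    PrefNN h c.reverse := by
  obtain ⟨hne, hend, hint⟩ := hS
  have hM : (0 : ℤ) < (m : ℤ) := by exact_mod_cast (by omega : 0 < m)
  have he0 : 0 ≤ h + hsum c := by
    have := hnn c.length
    rwa [hsum_take_of_ge (le_refl _)] at this
  have hge : (m : ℤ) - 1 ≤ h := vis_ge hM hv h0
  have hge' : (m : ℤ) - 1 ≤ h + hsum c := vis_ge hM hend he0
  intro i
  rcases le_or_gt c.length i with hle | hlt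
  · rw [hsum_take_of_ge (by simpa using hle), hsum_reverse]
    exact he0
  · rcases Nat.eq_zero_or_pos i with rfl | hi
    · simpa using h0
    · rw [hsum_take_reverse]
      set j := c.length - i with hj
      -- X := h + hsum (c.take j); goal: 0 ≤ h + (hsum c - hsum (c.take j))
      by_contra hcon
      push_neg at hcon
      -- so  h + hsum c + h < h + hsum (c.take j) + h ... i.e. X > (h+hsum c) + h
      set X : ℤ := h + hsum (c.take j) with hX
      have hXbig : (h + hsum c) + h < X := by omega
      set V : ℤ := max h (h + hsum c) + (m : ℤ) with hV
      have hVvis : V % (m : ℤ) = (m : ℤ) - 1 := by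
        rcases max_choice h (h + hsum c) with hmx | hmx <;> rw [hV, hmx, vis_add_M] <;>
          assumption
      have hVleX : V ≤ X := by
        rcases max_choice h (h + hsum c) with hmx | hmx <;> rw [hV, hmx] <;> omega
      obtain ⟨j', hj1, hj2, hj3⟩ := ivt_up (fun j' => h + hsum (c.take j'))
        (fun j' => by have := hsum_take_succ_le c j'; omega) V j 0 (Nat.zero_le _)
        (by simp only [List.take_zero, hsum_nil, add_zero]; rcases le_total h (h + hsum c) with
          hc1 | hc1 <;> omega)
        (by omega)
      have hj3' : h + hsum (c.take j') = V := hj3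
      have hj'0 : 0 < j' := by
        rcases Nat.eq_zero_or_pos j' with rfl | hp
        · exfalso
          simp only [List.take_zero, hsum_nil, add_zero] at hj3'
          have : h ≤ max h (h + hsum c) := le_max_left _ _
          omega
        · exact hp
      have hj'len : j' < c.length := by
        rcases Nat.lt_or_ge j' c.length with hq | hq
        · exact hq
        · exfalso
          rw [hsum_take_of_ge hq] at hj3'
          have : h + hsum c ≤ max h (h + hsum c) := le_max_right _ _
          omega
      exact hint j' hj'0 hj'len (by rw [hj3']; exact hVvis)

lemma chain_rev_nn {m : ℕ} (hm : 2 ≤ m) :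
    ∀ (cs : List (List Bool)) (h : ℤ), ChainOK m h cs → h % (m : ℤ) = (m : ℤ) - 1 →
      0 ≤ h → PrefNN h cs.flatten → PrefNN h (midrev cs).flatten := by
  intro cs
  induction cs with
  | nil => intro h hc; exact absurd hc (by simp [ChainOK])
  | cons c cs ih =>
    intro h hc hv h0 hnn
    rcases cs with _ | ⟨c', cs'⟩
    · exact hnn
    · rw [ChainOK_cons₂] at hc
      rw [List.flatten_cons] at hnn
      rw [midrev_cons (by simp), List.flatten_cons]
      rw [prefnn_append] at hnn ⊢
      obtain ⟨hnn1, hnn2⟩ := hnn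
      have he0 : 0 ≤ h + hsum c := by simpa using hnn2 0
      refine ⟨seg_rev_nn hm hv hc.1 hnn1 h0, ?_⟩
      rw [hsum_reverse]
      exact ih _ hc.2 hc.1.2.1 he0 hnn2

lemma phi_prefnn {m : ℕ} (hm : 2 ≤ m) {p : List Bool} (hnn : PrefNN 0 p) :
    PrefNN 0 (phi m p) := by
  rcases hE : chunks m 0 p with _ | ⟨c, cs⟩
  · exact absurd hE (chunks_ne_nil m p 0)
  · have hfl := chunks_flatten m p 0
    rw [hE] at hfl
    rw [phi_eq hE, List.flatten_cons]
    rcases cs with _ | ⟨c', cs'⟩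
    · rw [midrev_nil, List.flatten_nil]
      rw [← hfl] at hnn
      simpa using hnn
    · have hch : ChainOK m 0 (c :: c' :: cs') := by
        have := chunks_chain m p 0
        rwa [hE] at this
      rw [ChainOK_cons₂] at hch
      rw [← hfl, List.flatten_cons, prefnn_append] at hnn
      obtain ⟨hnn1, hnn2⟩ := hnn
      rw [prefnn_append]
      refine ⟨hnn1, ?_⟩
      have he0 : 0 ≤ 0 + hsum c := by simpa using hnn2 0
      exact chain_rev_nn hm _ _ hch.2 hch.1.2.1 he0 hnn2

/-! ### Evaluating the statistics chunk by chunk -/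

lemma hsum_take_succ_eq {q : List Bool} {i : ℕ} (hi : i < q.length) :
    hsum (q.take (i + 1)) = hsum (q.take i) + sv (q.getD i false) := by
  rw [List.take_succ, hsum_append, List.getElem?_eq_getElem hi]
  congr 1
  simp [List.getD_eq_getElem?_getD, List.getElem?_eq_getElem hi]

/-- In a tail chunk there are no up steps landing at a visit height. -/
lemma cnt_b_tail {m : ℕ} {h : ℤ} {t : List Bool} (hT : TailOK m h t) :
    cnt m ((m : ℤ) - 1) h t = 0 := by
  rw [cnt_eq_card, Finset.card_eq_zero, Finset.filter_eq_empty_iff]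
  intro i hi
  rw [Finset.mem_range] at hi
  rintro ⟨-, h2⟩
  exact hT (i + 1) (by omega) (by omega) h2

/-- In a segment the only up step landing at a visit height can be the last step. -/
lemma cnt_b_seg {m : ℕ} {h : ℤ} {c : List Bool} (hS : SegOK m h c) :
    cnt m ((m : ℤ) - 1) h c = if c.getLast? = some true then 1 else 0 := by
  obtain ⟨hne, hend, hint⟩ := hS
  have hlen : 0 < c.length := List.length_pos_iff.mpr hne
  rw [cnt_eq_card]
  split_ifs with hQ
  · rw [Finset.card_eq_one]
    refine ⟨c.length - 1, Finset.eq_singleton_iff_unique_mem.mpr ⟨?_, ?_⟩⟩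
    · rw [Finset.mem_filter, Finset.mem_range]
      have h1 : c.getD (c.length - 1) false = true := by
        rw [List.getD_eq_getElem?_getD, ← List.getLast?_eq_getElem?, hQ]
        rfl
      refine ⟨by omega, h1, ?_⟩
      rw [(by omega : c.length - 1 + 1 = c.length), List.take_length]
      exact hend
    · intro i hi
      rw [Finset.mem_filter, Finset.mem_range] at hi
      obtain ⟨h0, h1, h2⟩ := hi
      by_contra hne2
      exact hint (i + 1) (by omega) (by omega) h2
  · rw [Finset.card_eq_zero, Finset.filter_eq_empty_iff]
    intro i hi
    rw [Finset.mem_range] at hi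
    rintro ⟨h1, h2⟩
    have hieq : i = c.length - 1 := by
      by_contra hne2
      exact hint (i + 1) (by omega) (by omega) h2
    apply hQ
    subst hieq
    rw [List.getLast?_eq_getElem?, List.getElem?_eq_getElem (by omega)]
    rw [List.getD_eq_getElem?_getD, List.getElem?_eq_getElem (by omega)] at h1
    simp at h1 ⊢
    exact h1

/-- Up steps starting at a visit height: only possibly the first step of a chunk,
and only when the chunk starts at a visit height. -/
lemma cnt_a_noint {m : ℕ} (hm : 0 < m) {h : ℤ} {c : List Bool}
    (hint : ∀ i, 0 < i → i < c.length → (h + hsum (c.take i)) % (m : ℤ) ≠ (m : ℤ) - 1) :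
    cnt m 0 h c =
      if h % (m : ℤ) = (m : ℤ) - 1 ∧ c.head? = some true then 1 else 0 := by
  have hM : (0 : ℤ) < (m : ℤ) := by exact_mod_cast hm
  rw [cnt_eq_card]
  split_ifs with hQ
  · obtain ⟨hv, hh⟩ := hQ
    rcases c with _ | ⟨b, t⟩
    · simp at hh
    · have hb : b = true := by simpa using hh
      subst hb
      rw [Finset.card_eq_one]
      refine ⟨0, Finset.eq_singleton_iff_unique_mem.mpr ⟨?_, ?_⟩⟩
      · rw [Finset.mem_filter, Finset.mem_range]
        refine ⟨by simp, by simp, ?_⟩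
        have : hsum ((true :: t).take (0 + 1)) = 1 := by simp [sv]
        rw [this]
        exact (vis_add_one hM).mpr hv
      · intro i hi
        rw [Finset.mem_filter, Finset.mem_range] at hi
        obtain ⟨h0, h1, h2⟩ := hi
        by_contra hne2
        have hi1 : 0 < i := by omega
        rw [hsum_take_succ_eq h0, h1] at h2
        have : sv true = 1 := rfl
        rw [this, ← add_assoc] at h2
        exact hint i hi1 h0 ((vis_add_one hM).mp h2)
  · rw [Finset.card_eq_zero, Finset.filter_eq_empty_iff]
    intro i hi
    rw [Finset.mem_range] at hi
    rintro ⟨h1, h2⟩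
    rw [hsum_take_succ_eq hi, h1] at h2
    have hsv : sv true = 1 := rfl
    rw [hsv, ← add_assoc] at h2
    have hvis := (vis_add_one hM).mp h2
    rcases Nat.eq_zero_or_pos i with rfl | hi0
    · apply hQ
      simp only [List.take_zero, hsum_nil, add_zero] at hvis
      refine ⟨hvis, ?_⟩
      rcases c with _ | ⟨b, t⟩
      · simp at hi
      · rw [List.getD_eq_getElem?_getD] at h1
        simp at h1 ⊢
        exact h1
    · exact hint i hi0 hi hvis

/-- The first chunk of a Dyck path ends with an up step. -/
lemma seg_last_up {m : ℕ} (hm : 2 ≤ m) {c : List Bool}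
    (hS : SegOK m 0 c) (hnn : PrefNN 0 c) : c.getLast? = some true := by
  obtain ⟨hne, hend, hint⟩ := hS
  have hlen : 0 < c.length := List.length_pos_iff.mpr hne
  have hM : (0 : ℤ) < (m : ℤ) := by exact_mod_cast (by omega : 0 < m)
  have he0 : (0 : ℤ) ≤ 0 + hsum c := by
    have := hnn c.length
    rwa [hsum_take_of_ge (le_refl _)] at this
  have hgev : (m : ℤ) - 1 ≤ 0 + hsum c := vis_ge hM hend he0
  rcases hgl : c.getLast? with _ | b
  · rw [List.getLast?_eq_none_iff] at hgl
    exact absurd hgl hne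
  · rcases b with _ | _
    · exfalso
      -- last step is a down step
      have hgd : c.getD (c.length - 1) false = false := by
        rw [List.getD_eq_getElem?_getD, ← List.getLast?_eq_getElem?, hgl]
        rfl
      have hX : hsum (c.take (c.length - 1)) = hsum c + 1 := by
        have := hsum_take_succ_eq (q := c) (i := c.length - 1) (by omega)
        rw [(by omega : c.length - 1 + 1 = c.length), List.take_length, hgd] at this
        have hsv : sv false = -1 := rfl
        rw [hsv] at this
        omega
      obtain ⟨j, hj0, hj1, hj2⟩ := ivt_up (fun j => 0 + hsum (c.take j))
        (fun j => by have := hsum_take_succ_le c j; omega)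
        (0 + hsum c) (c.length - 1) 0 (Nat.zero_le _)
        (by simp only [List.take_zero, hsum_nil, add_zero]; omega)
        (by simp only [hX]; omega)
      have hj2' : 0 + hsum (c.take j) = 0 + hsum c := hj2
      have hjpos : 0 < j := by
        rcases Nat.eq_zero_or_pos j with rfl | hp
        · exfalso
          simp only [List.take_zero, hsum_nil, add_zero] at hj2'
          omega
        · exact hp
      exact hint j hjpos (by omega) (by rw [hj2']; exact hend)
    · rfl

/-- The last chunk of a Dyck path starts with a down step. -/
lemma tail_head_down {m : ℕ} (hm : 2 ≤ m) {h : ℤ} {t : List Bool}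
    (hT : TailOK m h t) (hv : h % (m : ℤ) = (m : ℤ) - 1) (h0 : 0 ≤ h)
    (hz : h + hsum t = 0) : t.head? ≠ some true := by
  intro hh
  have hM : (0 : ℤ) < (m : ℤ) := by exact_mod_cast (by omega : 0 < m)
  have hge : (m : ℤ) - 1 ≤ h := vis_ge hM hv h0
  rcases t with _ | ⟨b, t'⟩
  · simp at hh
  · have hb : b = true := by simpa using hh
    subst hb
    have hX1 : h + hsum ((true :: t').take 1) = h + 1 := by
      simp [sv]
    have hXlen : h + hsum ((true :: t').take (true :: t').length) = 0 := by
      rw [List.take_length]; exact hz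
    obtain ⟨j, hj0, hj1, hj2⟩ := ivt_down (fun j => h + hsum ((true :: t').take j))
      (fun j => by have := hsum_take_succ_ge (true :: t') j; omega)
      h (true :: t').length 1 (by simp) (by simp only [hX1]; omega)
      (by simp only [hXlen]; omega)
    have hj2' : h + hsum ((true :: t').take j) = h := hj2
    exact hT j (by omega) hj1 (by rw [hj2']; exact hv)

/-- Core computation: reversing the interior chunks turns the `b`-statistic into the
`a`-statistic. -/
lemma stat_chain {m : ℕ} (hm : 2 ≤ m) :
    ∀ (cs : List (List Bool)) (h : ℤ), ChainOK m h cs → h % (m : ℤ) = (m : ℤ) - 1 →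
      0 ≤ h → PrefNN h cs.flatten → h + hsum cs.flatten = 0 →
      cnt m ((m : ℤ) - 1) h (midrev cs).flatten = cnt m 0 h cs.flatten := by
  have hm0 : 0 < m := by omega
  intro cs
  induction cs with
  | nil => intro h hc; exact absurd hc (by simp [ChainOK])
  | cons c cs ih =>
    intro h hc hv h0 hnn hz
    rcases cs with _ | ⟨c', cs'⟩
    · -- single (tail) chunk
      rw [ChainOK_singleton] at hc
      rw [midrev_singleton]
      simp only [List.flatten_cons, List.flatten_nil, List.append_nil] at hz ⊢
      rw [cnt_b_tail hc, cnt_a_noint hm0 (fun i hi hlt => hc i hi hlt.le)]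
      have := tail_head_down hm hc hv h0 hz
      split_ifs with hQ
      · exact absurd hQ.2 this
      · rfl
    · rw [ChainOK_cons₂] at hc
      rw [midrev_cons (by simp), List.flatten_cons, List.flatten_cons, cnt_append, cnt_append,
        hsum_reverse]
      rw [List.flatten_cons] at hnn hz
      rw [prefnn_append] at hnn
      obtain ⟨hnn1, hnn2⟩ := hnn
      have he0 : 0 ≤ h + hsum c := by simpa using hnn2 0
      congr 1
      · -- the two chunk contributions agree
        rw [cnt_b_seg (SegOK_reverse hm0 hv hc.1), cnt_a_noint hm0 hc.1.2.2,
          List.getLast?_reverse]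
        simp [hv]
      · -- the rest by induction
        rw [hsum_append] at hz
        exact ih _ hc.2 hc.1.2.1 he0 hnn2 (by omega)

/-- Main statistic identity for φ. -/
lemma stat_phi {m : ℕ} (hm : 2 ≤ m) {p : List Bool} {c : List Bool} {cs : List (List Bool)}
    (hE : chunks m 0 p = c :: cs) (hcs : cs ≠ [])
    (hnn : PrefNN 0 p) (hz : hsum p = 0) :
    cnt m ((m : ℤ) - 1) 0 (phi m p) = cnt m 0 0 p + 1 := by
  have hm0 : 0 < m := by omega
  have hfl := chunks_flatten m p 0
  rw [hE] at hfl
  have hch := chunks_chain m p 0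
  rw [hE] at hch
  rcases cs with _ | ⟨c', cs'⟩
  · exact absurd rfl hcs
  · rw [ChainOK_cons₂] at hch
    rw [List.flatten_cons] at hfl
    rw [phi_eq hE, List.flatten_cons, cnt_append]
    conv_rhs => rw [← hfl, cnt_append]
    rw [← hfl, prefnn_append] at hnn
    obtain ⟨hnn1, hnn2⟩ := hnn
    have he0 : 0 ≤ 0 + hsum c := by simpa using hnn2 0
    have hzrest : (0 + hsum c) + hsum (c' :: cs').flatten = 0 := by
      have : hsum (c ++ (c' :: cs').flatten) = hsum p := by rw [hfl]
      rw [hsum_append] at this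
      omega
    have hterm2 := stat_chain hm _ _ hch.2 hch.1.2.1 he0 hnn2 hzrest
    have hterm1L : cnt m ((m : ℤ) - 1) 0 c = 1 := by
      rw [cnt_b_seg hch.1, seg_last_up hm hch.1 hnn1]
      simp
    have hterm1R : cnt m 0 0 c = 0 := by
      rw [cnt_a_noint hm0 hch.1.2.2]
      have : ¬ ((0 : ℤ) % (m : ℤ) = (m : ℤ) - 1) := by
        rw [Int.zero_emod]
        omega
      split_ifs with hQ
      · exact absurd hQ.1 this
      · rfl
    rw [hterm1L, hterm1R, hterm2]
    omega

/-- When the path never visits a height `≡ m-1`, both statistics vanish. -/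
lemma stats_zero_single {m : ℕ} (hm : 2 ≤ m) {p : List Bool} {c : List Bool}
    (hE : chunks m 0 p = [c]) :
    cnt m 0 0 p = 0 ∧ cnt m ((m : ℤ) - 1) 0 p = 0 := by
  have hm0 : 0 < m := by omega
  have hfl := chunks_flatten m p 0
  rw [hE] at hfl
  simp only [List.flatten_cons, List.flatten_nil, List.append_nil] at hfl
  have hch := chunks_chain m p 0
  rw [hE, ChainOK_singleton] at hch
  subst hfl
  constructor
  · rw [cnt_a_noint hm0 (fun i hi hlt => hch i hi hlt.le)]
    have : ¬ ((0 : ℤ) % (m : ℤ) = (m : ℤ) - 1) := by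
      rw [Int.zero_emod]
      omega
    split_ifs with hQ
    · exact absurd hQ.1 this
    · rfl
  · exact cnt_b_tail hch

/-! ### Dyck path facts -/

lemma dyck_prefnn {n : ℕ} {p : List Bool} (hd : IsDyckPath n p) : PrefNN 0 p := by
  intro i
  rw [hsum_eq_counts]
  have := hd.2.2 i
  omega

lemma dyck_hsum_zero {n : ℕ} {p : List Bool} (hd : IsDyckPath n p) : hsum p = 0 := by
  rw [hsum_eq_counts]
  have h1 := hd.1
  have h2 := hd.2.1
  have h3 := count_true_add_count_false p
  omega

lemma phi_isDyck {m n : ℕ} (hm : 2 ≤ m) {p : List Bool} (hd : IsDyckPath n p) :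
    IsDyckPath n (phi m p) := by
  refine ⟨by rw [phi_length]; exact hd.1, by rw [phi_count]; exact hd.2.1, ?_⟩
  have H := phi_prefnn (m := m) hm (dyck_prefnn hd)
  intro i
  have h2 := H i
  rw [hsum_eq_counts] at h2
  omega

end DyckShift

open DyckShift in
/-- For `m ≥ 2`, the number of Dyck paths of semilength `n` with exactly `k` up steps
at height `h ≡ 0 (mod m)` equals the number of Dyck paths of semilength `n` with
exactly `k+1` up steps at height `h ≡ m-1 (mod m)`. -/
theorem upSteps_mod_m_shift (m n k : ℕ) (hm : 2 ≤ m) (hn : 1 ≤ n) (hk : 1 ≤ k) :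
    Nat.card {p : List Bool // IsDyckPath n p ∧ upStepsMod m 0 p = k} =
      Nat.card {p : List Bool // IsDyckPath n p ∧ upStepsMod m (m - 1) p = k + 1} := by
  classical
  have hm0 : 0 < m := by omega
  have hcast : ((m - 1 : ℕ) : ℤ) = (m : ℤ) - 1 := by omega
  have bridgeA : ∀ p : List Bool, IsDyckPath n p → upStepsMod m 0 p = cnt m 0 0 p := by
    intro p hd
    have := upStepsMod_eq_cnt m 0 p hd.2.2
    simpa using this
  have bridgeB : ∀ p : List Bool, IsDyckPath n p →
      upStepsMod m (m - 1) p = cnt m ((m : ℤ) - 1) 0 p := by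
    intro p hd
    have := upStepsMod_eq_cnt m (m - 1) p hd.2.2
    rwa [hcast] at this
  have keyNZ : ∀ p : List Bool, IsDyckPath n p →
      (upStepsMod m 0 p ≠ 0 ∨ upStepsMod m (m - 1) p ≠ 0) →
      ∃ c cs, chunks m 0 p = c :: cs ∧ cs ≠ [] := by
    intro p hd hnz
    rcases hE : chunks m 0 p with _ | ⟨c, cs⟩
    · exact absurd hE (chunks_ne_nil m p 0)
    · refine ⟨c, cs, rfl, ?_⟩
      rintro rfl
      obtain ⟨hz1, hz2⟩ := stats_zero_single hm hE
      rw [← bridgeA p hd] at hz1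
      rw [← bridgeB p hd] at hz2
      rcases hnz with hnz | hnz
      · exact hnz hz1
      · exact hnz hz2
  have keyStat : ∀ p : List Bool, IsDyckPath n p → ∀ c cs, chunks m 0 p = c :: cs → cs ≠ [] →
      upStepsMod m (m - 1) (phi m p) = upStepsMod m 0 p + 1 := by
    intro p hd c cs hE hcs
    rw [bridgeB _ (phi_isDyck hm hd), bridgeA _ hd]
    exact stat_phi hm hE hcs (dyck_prefnn hd) (dyck_hsum_zero hd)
  apply Nat.card_congr
  refine ⟨fun x => ⟨phi m x.1, phi_isDyck hm x.2.1, ?_⟩,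
          fun y => ⟨phi m y.1, phi_isDyck hm y.2.1, ?_⟩, ?_, ?_⟩
  · -- forward statistic
    obtain ⟨p, hd, ha⟩ := x
    obtain ⟨c, cs, hE, hcs⟩ := keyNZ p hd (Or.inl (by rw [ha]; omega))
    rw [keyStat p hd c cs hE hcs, ha]
  · -- backward statistic
    obtain ⟨q, hd, hb⟩ := y
    obtain ⟨c, cs, hE, hcs⟩ := keyNZ q hd (Or.inr (by rw [hb]; omega))
    have hd' : IsDyckPath n (phi m q) := phi_isDyck hm hd
    have hE' : chunks m 0 (phi m q) = c :: midrev cs := chunks_phi hm0 hE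
    have hcs' : midrev cs ≠ [] := midrev_ne_nil hcs
    have := keyStat (phi m q) hd' c (midrev cs) hE' hcs'
    rw [phi_phi hm0, hb] at this
    show upStepsMod m 0 (phi m q) = k
    omega
  · intro x
    exact Subtype.ext (phi_phi hm0 x.1)
  · intro y
    exact Subtype.ext (phi_phi hm0 y.1)

-- #print axioms upSteps_mod_m_shift
end

section
/- For every m ≥ 2 and n ≥ 1, the number of Dyck paths of semilength n with no up steps at height h ≡ 0 (mod m) equals the number of Dyck paths of semilength n with no up steps at height h ≡ m-1 (mod m) plus the number of Dyck paths of semilength n with exactly one up step at height h ≡ m-1 (mod m). -/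
namespace DyckFlip

/-- Integer-valued height after `i` steps. -/
def ht (p : List Bool) (i : ℕ) : ℤ :=
  ((p.take i).count true : ℤ) - ((p.take i).count false : ℤ)

lemma ht_zero (p : List Bool) : ht p 0 = 0 := by simp [ht]

lemma count_tf (l : List Bool) : l.count true + l.count false = l.length := by
  induction l with
  | nil => simp
  | cons a t ih => cases a <;> simp [List.count_cons] <;> omega

lemma count_map_not_true (l : List Bool) : (l.map not).count true = l.count false := by
  rw [show (true : Bool) = not false from rfl, List.count_map_of_injective _ not (by decide)]

lemma count_map_not_false (l : List Bool) : (l.map not).count false = l.count true := by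
  rw [show (false : Bool) = not true from rfl, List.count_map_of_injective _ not (by decide)]

lemma ht_succ_aux (p : List Bool) (i : ℕ) (h : i < p.length) :
    p.take (i + 1) = p.take i ++ [p.getD i false] := by
  have h1 : p[i]? = some p[i] := List.getElem?_eq_getElem h
  have h2 : p.getD i false = p[i] := by
    rw [List.getD_eq_getElem?_getD, h1]; rfl
  rw [List.take_succ, h1, h2]
  rfl

lemma ht_succ_true {p : List Bool} {i : ℕ} (h : i < p.length)
    (hg : p.getD i false = true) : ht p (i + 1) = ht p i + 1 := by
  rw [ht, ht, ht_succ_aux p i h, hg]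
  simp [List.count_append]
  push_cast
  ring

lemma ht_succ_false {p : List Bool} {i : ℕ} (h : i < p.length)
    (hg : p.getD i false = false) : ht p (i + 1) = ht p i - 1 := by
  rw [ht, ht, ht_succ_aux p i h, hg]
  simp [List.count_append]
  push_cast
  ring

lemma ht_stable (p : List Bool) (i : ℕ) (h : p.length ≤ i) :
    ht p i = ht p p.length := by
  rw [ht, ht, List.take_of_length_le h, List.take_of_length_le le_rfl]

lemma ht_step (p : List Bool) (i : ℕ) :
    ht p (i + 1) = ht p i + 1 ∨ ht p (i + 1) = ht p i - 1 ∨ ht p (i + 1) = ht p i := by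
  rcases lt_or_ge i p.length with h | h
  · cases hg : p.getD i false
    · right; left; exact ht_succ_false h hg
    · left; exact ht_succ_true h hg
  · right; right
    rw [ht_stable p (i + 1) (by omega), ht_stable p i h]

lemma up_iff (p : List Bool) (i : ℕ) (h : i < p.length) :
    p.getD i false = true ↔ ht p (i + 1) = ht p i + 1 := by
  constructor
  · intro hg; exact ht_succ_true h hg
  · intro hgt
    cases hg : p.getD i false
    · have := ht_succ_false h hg; omega
    · rfl

lemma dyck_nonneg {n : ℕ} {p : List Bool} (hd : IsDyckPath n p) (i : ℕ) :
    0 ≤ ht p i := by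
  have := hd.2.2 i
  simp only [ht, sub_nonneg, Nat.cast_le]
  exact this

lemma dyck_end {n : ℕ} {p : List Bool} (hd : IsDyckPath n p) :
    ht p p.length = 0 := by
  have h1 := count_tf p
  have h2 := hd.1
  have h3 := hd.2.1
  rw [ht, List.take_of_length_le le_rfl]
  have : p.count false = n := by omega
  rw [h3, this]; ring

lemma ht_last {n : ℕ} {p : List Bool} (hd : IsDyckPath n p) (i : ℕ) (h : p.length ≤ i) :
    ht p i = 0 := by rw [ht_stable p i h, dyck_end hd]

lemma isDyck_of {n : ℕ} {p : List Bool} (hl : p.length = 2 * n)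
    (h0 : ∀ i, 0 ≤ ht p i) (he : ht p p.length = 0) : IsDyckPath n p := by
  have h1 := count_tf p
  rw [ht, List.take_of_length_le le_rfl] at he
  refine ⟨hl, by omega, fun i => ?_⟩
  have := h0 i
  simp only [ht, sub_nonneg, Nat.cast_le] at this
  exact this

lemma stepHeight_eq {p : List Bool} (h0 : ∀ i, 0 ≤ ht p i) (i : ℕ) :
    (stepHeight p i : ℤ) = ht p (i + 1) := by
  have := h0 (i + 1)
  simp only [ht, sub_nonneg, Nat.cast_le] at this
  rw [stepHeight, ht, Nat.cast_sub this]

lemma upStepsMod_eq (m c : ℕ) (p : List Bool) (h0 : ∀ i, 0 ≤ ht p i) :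
    upStepsMod m c p =
      ((Finset.range p.length).filter
        (fun i => ht p (i + 1) = ht p i + 1 ∧ ht p (i + 1) % (m : ℤ) = (c : ℤ))).card := by
  unfold upStepsMod
  congr 1
  apply Finset.filter_congr
  intro i hi
  simp only [Finset.mem_range] at hi
  have hs : (stepHeight p i : ℤ) = ht p (i + 1) := stepHeight_eq h0 i
  constructor
  · rintro ⟨h1, h2⟩
    refine ⟨(up_iff p i hi).mp h1, ?_⟩
    rw [← hs]
    exact_mod_cast h2
  · rintro ⟨h1, h2⟩
    refine ⟨(up_iff p i hi).mpr h1, ?_⟩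
    have h3 : (stepHeight p i : ℤ) % (m : ℤ) = (c : ℤ) := by rw [hs]; exact h2
    exact_mod_cast h3

lemma crossing (p : List Bool) (T : ℤ) (i₀ i₁ : ℕ) (h01 : i₀ ≤ i₁)
    (h0 : ht p i₀ < T) (h1 : T ≤ ht p i₁) :
    ∃ j, i₀ < j ∧ j ≤ i₁ ∧ ht p j = T ∧ ht p j = ht p (j - 1) + 1 ∧
      ∀ k, i₀ ≤ k → k < j → ht p k < T := by
  have hne : {k | i₀ ≤ k ∧ T ≤ ht p k}.Nonempty := ⟨i₁, h01, h1⟩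
  set j := sInf {k | i₀ ≤ k ∧ T ≤ ht p k} with hjdef
  have hj : i₀ ≤ j ∧ T ≤ ht p j := Nat.sInf_mem hne
  have hji : j ≤ i₁ :=
    Nat.sInf_le (show i₁ ∈ {k | i₀ ≤ k ∧ T ≤ ht p k} from ⟨h01, h1⟩)
  have hmin : ∀ k, i₀ ≤ k → k < j → ht p k < T := by
    intro k hk hkj
    by_contra h
    have hle := Nat.sInf_le (show k ∈ {k | i₀ ≤ k ∧ T ≤ ht p k} from ⟨hk, not_lt.mp h⟩)
    rw [← hjdef] at hle
    omega
  have hj0 : i₀ < j := by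
    rcases Nat.lt_or_ge i₀ j with h | h
    · exact h
    · have : j = i₀ := by omega
      rw [this] at hj; omega
  have hprev : ht p (j - 1) < T := hmin (j - 1) (by omega) (by omega)
  have hstep := ht_step p (j - 1)
  rw [show j - 1 + 1 = j by omega] at hstep
  have hT : ht p j = T ∧ ht p j = ht p (j - 1) + 1 := by
    rcases hstep with h | h | h <;> constructor <;> omega
  exact ⟨j, hj0, hji, hT.1, hT.2, hmin⟩

/-- class-0 count zero implies bounded by m-1 -/
lemma bound_of_no0 {m n : ℕ} {p : List Bool} (hm : 2 ≤ m) (hd : IsDyckPath n p)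
    (h : upStepsMod m 0 p = 0) : ∀ i, ht p i ≤ (m : ℤ) - 1 := by
  by_contra hc
  push_neg at hc
  obtain ⟨i, hi⟩ := hc
  have hm' : (2:ℤ) ≤ (m:ℤ) := by exact_mod_cast hm
  have hTi : (m : ℤ) ≤ ht p i := by omega
  obtain ⟨j, hj0, hji, hT, hup, -⟩ :=
    crossing p m 0 i (Nat.zero_le _) (by rw [ht_zero]; omega) hTi
  have hlen : j ≤ p.length := by
    by_contra h'
    have := ht_last hd j (by omega)
    omega
  rw [upStepsMod_eq m 0 p (dyck_nonneg hd)] at h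
  have hmem : j - 1 ∈ (Finset.range p.length).filter
      (fun i => ht p (i + 1) = ht p i + 1 ∧ ht p (i + 1) % (m : ℤ) = ((0:ℕ) : ℤ)) := by
    rw [Finset.mem_filter, Finset.mem_range]
    rw [show j - 1 + 1 = j by omega]
    exact ⟨by omega, hup, by rw [hT]; simp⟩
  rw [Finset.card_eq_zero] at h
  rw [h] at hmem
  exact absurd hmem (Finset.notMem_empty _)

lemma cast_m1 {m : ℕ} (hm : 2 ≤ m) : ((m - 1 : ℕ) : ℤ) = (m : ℤ) - 1 := by
  have : 1 ≤ m := by omega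
  push_cast [this]
  ring

/-- class-(m-1) count zero implies bounded by m-2 -/
lemma bound_of_nom1 {m n : ℕ} {p : List Bool} (hm : 2 ≤ m) (hd : IsDyckPath n p)
    (h : upStepsMod m (m - 1) p = 0) : ∀ i, ht p i ≤ (m : ℤ) - 2 := by
  by_contra hc
  push_neg at hc
  obtain ⟨i, hi⟩ := hc
  have hm' : (2:ℤ) ≤ (m:ℤ) := by exact_mod_cast hm
  have hTi : (m : ℤ) - 1 ≤ ht p i := by omega
  obtain ⟨j, hj0, hji, hT, hup, -⟩ :=
    crossing p ((m:ℤ) - 1) 0 i (Nat.zero_le _) (by rw [ht_zero]; omega) hTi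
  have hlen : j ≤ p.length := by
    by_contra h'
    have := ht_last hd j (by omega)
    omega
  rw [upStepsMod_eq m (m - 1) p (dyck_nonneg hd)] at h
  have hmem : j - 1 ∈ (Finset.range p.length).filter
      (fun i => ht p (i + 1) = ht p i + 1 ∧ ht p (i + 1) % (m : ℤ) = ((m - 1 : ℕ) : ℤ)) := by
    rw [Finset.mem_filter, Finset.mem_range]
    rw [show j - 1 + 1 = j by omega]
    refine ⟨by omega, hup, ?_⟩
    rw [hT, cast_m1 hm, Int.emod_eq_of_lt (by omega) (by omega)]
  rw [Finset.card_eq_zero] at h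
  rw [h] at hmem
  exact absurd hmem (Finset.notMem_empty _)

lemma no0_of_bound {m : ℕ} {p : List Bool} (hm : 2 ≤ m) (h0 : ∀ i, 0 ≤ ht p i)
    (hb : ∀ i, ht p i ≤ (m : ℤ) - 1) : upStepsMod m 0 p = 0 := by
  rw [upStepsMod_eq m 0 p h0, Finset.card_eq_zero, Finset.filter_eq_empty_iff]
  rintro i -
  rintro ⟨hup, hmod⟩
  have h1 := h0 i
  have h2 := hb (i + 1)
  have hm' : (2:ℤ) ≤ (m:ℤ) := by exact_mod_cast hm
  rw [Int.emod_eq_of_lt (by omega) (by omega)] at hmod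
  simp at hmod
  omega

lemma nom1_of_bound {m : ℕ} {p : List Bool} (hm : 2 ≤ m) (h0 : ∀ i, 0 ≤ ht p i)
    (hb : ∀ i, ht p i ≤ (m : ℤ) - 2) : upStepsMod m (m - 1) p = 0 := by
  rw [upStepsMod_eq m (m - 1) p h0, Finset.card_eq_zero, Finset.filter_eq_empty_iff]
  rintro i -
  rintro ⟨hup, hmod⟩
  have h1 := h0 i
  have h2 := hb (i + 1)
  have hm' : (2:ℤ) ≤ (m:ℤ) := by exact_mod_cast hm
  rw [Int.emod_eq_of_lt (by omega) (by omega), cast_m1 hm] at hmod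
  omega


/-! ### Flipping a middle segment -/

def flipSeg (a b : ℕ) (p : List Bool) : List Bool :=
  p.take a ++ ((p.drop a).take (b - a)).map not ++ p.drop b

lemma map_not_not (l : List Bool) : (l.map not).map not = l := by
  rw [List.map_map]
  have : (not ∘ not) = id := by funext x; simp
  rw [this, List.map_id]

section FlipSeg

variable {a b : ℕ} {p : List Bool}

lemma flipSeg_length (hab : a ≤ b) (hb : b ≤ p.length) :
    (flipSeg a b p).length = p.length := by
  simp [flipSeg]
  omega

lemma flip_take_left (hb : a ≤ p.length) {i : ℕ} (h : i ≤ a) :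
    (flipSeg a b p).take i = p.take i := by
  rw [flipSeg, List.append_assoc, List.take_append]
  have hl : (p.take a).length = a := by rw [List.length_take]; omega
  rw [hl, show i - a = 0 by omega]
  simp only [List.take_zero, List.append_nil, List.take_take]
  rw [show min i a = i by omega]

lemma mid_length (hab : a ≤ b) (hb : b ≤ p.length) :
    (((p.drop a).take (b - a)).map not).length = b - a := by
  simp only [List.length_map, List.length_take, List.length_drop]
  omega

lemma flip_take_mid (hab : a ≤ b) (hb : b ≤ p.length) {i : ℕ} (h1 : a ≤ i) (h2 : i ≤ b) :
    (flipSeg a b p).take i = p.take a ++ ((p.drop a).take (i - a)).map not := by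
  rw [flipSeg, List.append_assoc, List.take_append]
  have hl : (p.take a).length = a := by rw [List.length_take]; omega
  rw [hl, List.take_of_length_le (by omega), List.take_append,
    mid_length hab hb, show i - a - (b - a) = 0 by omega]
  simp only [List.take_zero, List.append_nil, ← List.map_take, List.take_take]
  rw [show min (i - a) (b - a) = i - a by omega]

lemma flip_take_right (hab : a ≤ b) (hb : b ≤ p.length) {i : ℕ} (h1 : b ≤ i) :
    (flipSeg a b p).take i =
      p.take a ++ ((p.drop a).take (b - a)).map not ++ (p.drop b).take (i - b) := by
  have hl : (p.take a).length = a := by rw [List.length_take]; omega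
  rw [flipSeg, List.append_assoc, List.take_append, hl,
    List.take_append, mid_length hab hb,
    show i - a - (b - a) = i - b by omega,
    List.take_of_length_le (show (p.take a).length ≤ i by rw [hl]; omega),
    List.take_of_length_le
      (show (((p.drop a).take (b - a)).map not).length ≤ i - a by
        rw [mid_length hab hb]; omega),
    List.append_assoc]

lemma take_decomp (p : List Bool) {a i : ℕ} (h : a ≤ i) :
    p.take i = p.take a ++ (p.drop a).take (i - a) := by
  conv_lhs => rw [show i = a + (i - a) by omega]
  rw [List.take_add]

lemma drop_take_drop (p : List Bool) {a b : ℕ} (hab : a ≤ b) :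
    (p.drop a).take (b - a) ++ p.drop b = p.drop a := by
  conv_rhs => rw [← List.take_append_drop (b - a) (p.drop a)]
  rw [List.drop_drop, show a + (b - a) = b by omega]

lemma ht_flip_left (hb : a ≤ p.length) {i : ℕ} (h : i ≤ a) :
    ht (flipSeg a b p) i = ht p i := by
  rw [ht, ht, flip_take_left hb h]

lemma ht_flip_mid (hab : a ≤ b) (hb : b ≤ p.length) {i : ℕ} (h1 : a ≤ i) (h2 : i ≤ b) :
    ht (flipSeg a b p) i = 2 * ht p a - ht p i := by
  rw [ht, flip_take_mid hab hb h1 h2, ht, ht, take_decomp p h1]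
  simp only [List.count_append, count_map_not_true, count_map_not_false]
  push_cast
  ring

lemma ht_flip_right (hab : a ≤ b) (hb : b ≤ p.length) {i : ℕ} (h1 : b ≤ i) :
    ht (flipSeg a b p) i = ht p i + 2 * ht p a - 2 * ht p b := by
  rw [ht, flip_take_right hab hb h1, ht, ht, ht, take_decomp p (show a ≤ i by omega),
    take_decomp p hab]
  rw [show (p.drop a).take (i - a) = (p.drop a).take (b - a) ++ (p.drop b).take (i - b) from ?_]
  · simp only [List.count_append, count_map_not_true, count_map_not_false]
    push_cast
    ring
  · rw [show i - a = (b - a) + (i - b) by omega, List.take_add, List.drop_drop,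
      show a + (b - a) = b by omega]

lemma flipSeg_flipSeg (hab : a ≤ b) (hb : b ≤ p.length) :
    flipSeg a b (flipSeg a b p) = p := by
  have hl : (p.take a).length = a := by rw [List.length_take]; omega
  have hml := mid_length hab hb (p := p)
  have h1 : (flipSeg a b p).take a = p.take a := flip_take_left (by omega) le_rfl
  have h2 : (flipSeg a b p).drop a = ((p.drop a).take (b - a)).map not ++ p.drop b := by
    rw [flipSeg, List.append_assoc, List.drop_append, hl,
      List.drop_eq_nil_of_le (by omega), show a - a = 0 by omega, List.drop_zero,
      List.nil_append]
  have h3 : ((flipSeg a b p).drop a).take (b - a) = ((p.drop a).take (b - a)).map not := by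
    rw [h2, List.take_append, List.take_of_length_le (by rw [hml]), hml,
      show b - a - (b - a) = 0 by omega]
    simp only [List.take_zero, List.append_nil]
  have h4 : (flipSeg a b p).drop b = p.drop b := by
    rw [flipSeg, List.drop_append,
      List.drop_eq_nil_of_le (by rw [List.length_append, hl, hml]; omega),
      List.length_append, hl, hml, show b - (a + (b - a)) = 0 by omega, List.drop_zero,
      List.nil_append]
  conv_lhs => rw [flipSeg]
  rw [h1, h3, h4, map_not_not, List.append_assoc, drop_take_drop p hab,
    List.take_append_drop]

end FlipSeg


/-! ### The reflection map -/

def topSet (m : ℕ) (p : List Bool) : Set ℕ := {i | i ≤ p.length ∧ (m : ℤ) - 1 ≤ ht p i}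

noncomputable def fa (m : ℕ) (p : List Bool) : ℕ := sInf (topSet m p)

noncomputable def fb (m : ℕ) (p : List Bool) : ℕ := sSup (topSet m p)

noncomputable def F (m : ℕ) (p : List Bool) : List Bool := flipSeg (fa m p) (fb m p) p

lemma topSet_bdd (m : ℕ) (p : List Bool) : BddAbove (topSet m p) :=
  ⟨p.length, fun _ hx => hx.1⟩

lemma fa_mem {m : ℕ} {p : List Bool} (hne : (topSet m p).Nonempty) :
    fa m p ∈ topSet m p := Nat.sInf_mem hne

lemma fa_le {m : ℕ} {p : List Bool} {i : ℕ} (h : i ∈ topSet m p) : fa m p ≤ i :=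
  Nat.sInf_le h

lemma fb_mem {m : ℕ} {p : List Bool} (hne : (topSet m p).Nonempty) :
    fb m p ∈ topSet m p := Nat.sSup_mem hne (topSet_bdd m p)

lemma le_fb {m : ℕ} {p : List Bool} {i : ℕ} (h : i ∈ topSet m p) : i ≤ fb m p :=
  le_csSup (topSet_bdd m p) h

/-- All the structural facts about the first/last visit to level `m-1`. -/
lemma top_facts {m n : ℕ} {p : List Bool} (hm : 2 ≤ m) (hd : IsDyckPath n p)
    (hne : (topSet m p).Nonempty) :
    fa m p ≤ fb m p ∧ fb m p ≤ p.length ∧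
    ht p (fa m p) = (m : ℤ) - 1 ∧ ht p (fb m p) = (m : ℤ) - 1 ∧
    (∀ i, i < fa m p → ht p i < (m : ℤ) - 1) ∧
    (∀ i, fb m p < i → ht p i < (m : ℤ) - 1) ∧ 1 ≤ fa m p := by
  have hm' : (2 : ℤ) ≤ (m : ℤ) := by exact_mod_cast hm
  have hamem := fa_mem hne
  have hbmem := fb_mem hne
  obtain ⟨halen, haht⟩ := hamem
  obtain ⟨hblen, hbht⟩ := hbmem
  have hab : fa m p ≤ fb m p := fa_le ⟨hblen, hbht⟩
  have hlow : ∀ i, i < fa m p → ht p i < (m : ℤ) - 1 := by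
    intro i hi
    by_contra h
    push_neg at h
    have : fa m p ≤ i := fa_le ⟨by omega, h⟩
    omega
  have hhigh : ∀ i, fb m p < i → ht p i < (m : ℤ) - 1 := by
    intro i hi
    rcases le_or_gt i p.length with h | h
    · by_contra hcon
      push_neg at hcon
      have : i ≤ fb m p := le_fb ⟨h, hcon⟩
      omega
    · rw [ht_last hd i (by omega)]
      omega
  have ha1 : 1 ≤ fa m p := by
    by_contra h
    have h0 : fa m p = 0 := by omega
    rw [h0, ht_zero] at haht
    omega
  have haeq : ht p (fa m p) = (m : ℤ) - 1 := by
    have hprev := hlow (fa m p - 1) (by omega)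
    have hstep := ht_step p (fa m p - 1)
    rw [show fa m p - 1 + 1 = fa m p by omega] at hstep
    omega
  have hbeq : ht p (fb m p) = (m : ℤ) - 1 := by
    have hnext := hhigh (fb m p + 1) (by omega)
    have hstep := ht_step p (fb m p)
    omega
  exact ⟨hab, hblen, haeq, hbeq, hlow, hhigh, ha1⟩

/-- height description of `F m p` plus basic invariance. -/
lemma F_facts {m n : ℕ} {p : List Bool} (hm : 2 ≤ m) (hd : IsDyckPath n p)
    (hne : (topSet m p).Nonempty) :
    (∀ i, i ≤ fa m p → ht (F m p) i = ht p i) ∧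
    (∀ i, fa m p ≤ i → i ≤ fb m p → ht (F m p) i = 2 * ((m : ℤ) - 1) - ht p i) ∧
    (∀ i, fb m p ≤ i → ht (F m p) i = ht p i) ∧
    (F m p).length = p.length := by
  obtain ⟨hab, hblen, haeq, hbeq, hlow, hhigh, ha1⟩ := top_facts hm hd hne
  refine ⟨?_, ?_, ?_, flipSeg_length hab hblen⟩
  · intro i hi
    exact ht_flip_left (by omega) hi
  · intro i h1 h2
    show ht (flipSeg (fa m p) (fb m p) p) i = 2 * ((m : ℤ) - 1) - ht p i
    rw [ht_flip_mid hab hblen h1 h2, haeq]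
  · intro i hi
    show ht (flipSeg (fa m p) (fb m p) p) i = ht p i
    rw [ht_flip_right hab hblen hi, haeq, hbeq]
    ring

/-- `F m p` is a Dyck path provided that the middle part is bounded by `2m - 2`. -/
lemma F_dyck {m n : ℕ} {p : List Bool} (hm : 2 ≤ m) (hd : IsDyckPath n p)
    (hne : (topSet m p).Nonempty)
    (hbound : ∀ i, fa m p ≤ i → i ≤ fb m p → ht p i ≤ 2 * (m : ℤ) - 2) :
    IsDyckPath n (F m p) := by
  obtain ⟨hab, hblen, haeq, hbeq, hlow, hhigh, ha1⟩ := top_facts hm hd hne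
  obtain ⟨hL, hM, hR, hlen⟩ := F_facts hm hd hne
  apply isDyck_of (hlen.trans hd.1)
  · intro i
    rcases le_or_gt i (fa m p) with h | h
    · rw [hL i h]; exact dyck_nonneg hd i
    · rcases le_or_gt i (fb m p) with h2 | h2
      · rw [hM i (by omega) h2]
        have := hbound i (by omega) h2
        omega
      · rw [hR i (by omega)]; exact dyck_nonneg hd i
  · rw [hlen, hR p.length hblen, dyck_end hd]

/-- `fa`, `fb` are invariant under `F`, and `F` is an involution. -/
lemma F_invol {m n : ℕ} {p : List Bool} (hm : 2 ≤ m) (hd : IsDyckPath n p)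
    (hne : (topSet m p).Nonempty) :
    fa m (F m p) = fa m p ∧ fb m (F m p) = fb m p ∧
    (topSet m (F m p)).Nonempty ∧ F m (F m p) = p := by
  obtain ⟨hab, hblen, haeq, hbeq, hlow, hhigh, ha1⟩ := top_facts hm hd hne
  obtain ⟨hL, hM, hR, hlen⟩ := F_facts hm hd hne
  have hmem_a : fa m p ∈ topSet m (F m p) := by
    refine ⟨by rw [hlen]; omega, ?_⟩
    rw [hL _ le_rfl, haeq]
  have hne' : (topSet m (F m p)).Nonempty := ⟨fa m p, hmem_a⟩
  have hfa : fa m (F m p) = fa m p := by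
    apply le_antisymm (fa_le hmem_a)
    by_contra h
    push_neg at h
    have hmem2 := fa_mem hne'
    obtain ⟨hlen2, hht2⟩ := hmem2
    have hlt : fa m (F m p) < fa m p := h
    rw [hL _ (by omega)] at hht2
    have := hlow _ hlt
    omega
  have hmem_b : fb m p ∈ topSet m (F m p) := by
    refine ⟨by rw [hlen]; omega, ?_⟩
    rw [hR _ le_rfl, hbeq]
  have hfb : fb m (F m p) = fb m p := by
    apply le_antisymm ?_ (le_fb hmem_b)
    by_contra h
    push_neg at h
    have hmem2 := fb_mem hne'
    obtain ⟨hlen2, hht2⟩ := hmem2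
    have hlt : fb m p < fb m (F m p) := h
    rw [hR _ (by omega)] at hht2
    have := hhigh _ hlt
    omega
  refine ⟨hfa, hfb, hne', ?_⟩
  show flipSeg (fa m (F m p)) (fb m (F m p)) (F m p) = p
  rw [hfa, hfb]
  exact flipSeg_flipSeg hab hblen


/-! ### Counting up steps of `F m p` -/

lemma emod_two_cases {x M : ℤ} (hM : 0 < M) (h0 : 0 ≤ x) (h2 : x < 2 * M) :
    x % M = x ∨ x % M = x - M := by
  rcases lt_or_ge x M with h | h
  · left; exact Int.emod_eq_of_lt h0 h
  · right
    have : x % M = (x - M + M * 1) % M := by ring_nf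
    rw [this, Int.add_mul_emod_self_left]
    exact Int.emod_eq_of_lt (by omega) (by omega)

lemma exists_top {m n : ℕ} {p : List Bool} (hm : 2 ≤ m) (hd : IsDyckPath n p)
    (h : upStepsMod m (m - 1) p ≠ 0) : (topSet m p).Nonempty := by
  by_contra hc
  apply h
  apply nom1_of_bound hm (dyck_nonneg hd)
  intro i
  by_contra hb
  push_neg at hb
  have hm' : (2 : ℤ) ≤ (m : ℤ) := by exact_mod_cast hm
  rcases le_or_gt i p.length with h' | h'
  · exact hc ⟨i, h', by omega⟩
  · have := ht_last hd i (by omega)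
    omega

/-- the canonical element of the `m-1` class filter: the step `fa - 1`. -/
lemma fa_sub_one_mem {m n : ℕ} {q p : List Bool} (hm : 2 ≤ m) (hd : IsDyckPath n p)
    (hn : 1 ≤ n) (hne : (topSet m p).Nonempty)
    (hq0 : ∀ i, 0 ≤ ht q i)
    (hqlen : q.length = p.length)
    (hqL : ∀ i, i ≤ fa m p → ht q i = ht p i) :
    fa m p - 1 ∈ (Finset.range q.length).filter
      (fun i => ht q (i + 1) = ht q i + 1 ∧ ht q (i + 1) % (m : ℤ) = ((m - 1 : ℕ) : ℤ)) := by
  obtain ⟨hab, hblen, haeq, hbeq, hlow, hhigh, ha1⟩ := top_facts hm hd hne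
  have hm' : (2 : ℤ) ≤ (m : ℤ) := by exact_mod_cast hm
  have hlen2 : 2 ≤ p.length := by rw [hd.1]; omega
  have hprev : ht p (fa m p - 1) = (m : ℤ) - 2 := by
    have hl := hlow (fa m p - 1) (by omega)
    have hstep := ht_step p (fa m p - 1)
    rw [show fa m p - 1 + 1 = fa m p by omega] at hstep
    omega
  rw [Finset.mem_filter, Finset.mem_range, show fa m p - 1 + 1 = fa m p by omega, hqlen]
  refine ⟨by omega, ?_, ?_⟩
  · rw [hqL _ le_rfl, hqL _ (by omega), haeq, hprev]
    ring
  · rw [hqL _ le_rfl, haeq, cast_m1 hm, Int.emod_eq_of_lt (by omega) (by omega)]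

/-- D-direction: if `p` is bounded by `m-1` and touches it, then `F m p` has exactly
one up step in class `m-1`. -/
lemma countD {m n : ℕ} {p : List Bool} (hm : 2 ≤ m) (hd : IsDyckPath n p) (hn : 1 ≤ n)
    (hne : (topSet m p).Nonempty) (hb1 : ∀ i, ht p i ≤ (m : ℤ) - 1) :
    upStepsMod m (m - 1) (F m p) = 1 := by
  obtain ⟨hab, hblen, haeq, hbeq, hlow, hhigh, ha1⟩ := top_facts hm hd hne
  obtain ⟨hL, hM, hR, hlen⟩ := F_facts hm hd hne
  have hm' : (2 : ℤ) ≤ (m : ℤ) := by exact_mod_cast hm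
  have hqd : IsDyckPath n (F m p) := F_dyck hm hd hne (fun i _ _ => by have := hb1 i; omega)
  have hq0 := dyck_nonneg hqd
  rw [upStepsMod_eq m (m - 1) (F m p) hq0]
  have hset : (Finset.range (F m p).length).filter
      (fun i => ht (F m p) (i + 1) = ht (F m p) i + 1 ∧
        ht (F m p) (i + 1) % (m : ℤ) = ((m - 1 : ℕ) : ℤ)) = {fa m p - 1} := by
    apply Finset.eq_singleton_iff_unique_mem.mpr
    constructor
    · exact fa_sub_one_mem hm hd hn hne hq0 hlen hL
    · rintro i hi
      rw [Finset.mem_filter, Finset.mem_range, hlen] at hi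
      obtain ⟨hilen, hup, hmod⟩ := hi
      rw [cast_m1 hm] at hmod
      by_contra hne2
      rcases le_or_gt (i + 1) (fa m p) with hc1 | hc1
      · -- left region
        rcases eq_or_lt_of_le hc1 with he | hlt
        · exact hne2 (by omega)
        · rw [hL _ (by omega)] at hmod
          have hl := hlow (i + 1) hlt
          have h0 := dyck_nonneg hd (i + 1)
          rw [Int.emod_eq_of_lt (by omega) (by omega)] at hmod
          omega
      · rcases le_or_gt (i + 1) (fb m p) with hc2 | hc2
        · -- middle region
          rw [hM (i + 1) (by omega) hc2] at hmod hup
          rw [hM i (by omega) (by omega)] at hup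
          have hbp := hb1 (i + 1)
          have h0 := dyck_nonneg hd (i + 1)
          have hbi := hb1 i
          have hx : ht p (i + 1) = ht p i - 1 := by omega
          rcases emod_two_cases (show (0:ℤ) < (m:ℤ) by omega)
            (show (0:ℤ) ≤ 2 * ((m : ℤ) - 1) - ht p (i + 1) by omega)
            (show 2 * ((m : ℤ) - 1) - ht p (i + 1) < 2 * (m:ℤ) by omega) with h | h <;>
            omega
        · -- right region
          rw [hR (i + 1) (by omega)] at hmod
          have hh := hhigh (i + 1) (by omega)
          have h0 := dyck_nonneg hd (i + 1)
          rw [Int.emod_eq_of_lt (by omega) (by omega)] at hmod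
          omega
  rw [hset, Finset.card_singleton]

/-- C-direction structural bounds: if `p` has exactly one up step in class `m-1`,
the whole middle part lies in `[m-1, 2m-2]`. -/
lemma countC_bounds {m n : ℕ} {p : List Bool} (hm : 2 ≤ m) (hd : IsDyckPath n p)
    (hn : 1 ≤ n) (hC : upStepsMod m (m - 1) p = 1) :
    ∀ i, fa m p ≤ i → i ≤ fb m p → ((m : ℤ) - 1 ≤ ht p i ∧ ht p i ≤ 2 * (m : ℤ) - 2) := by
  have hne : (topSet m p).Nonempty := exists_top hm hd (by omega)
  obtain ⟨hab, hblen, haeq, hbeq, hlow, hhigh, ha1⟩ := top_facts hm hd hne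
  have hm' : (2 : ℤ) ≤ (m : ℤ) := by exact_mod_cast hm
  have h0 := dyck_nonneg hd
  rw [upStepsMod_eq m (m - 1) p h0] at hC
  set Fil := (Finset.range p.length).filter
      (fun i => ht p (i + 1) = ht p i + 1 ∧ ht p (i + 1) % (m : ℤ) = ((m - 1 : ℕ) : ℤ))
    with hFil
  have hmem : fa m p - 1 ∈ Fil := fa_sub_one_mem hm hd hn hne h0 rfl (fun _ _ => rfl)
  have huniq : ∀ j ∈ Fil, j = fa m p - 1 := by
    intro j hj
    obtain ⟨x, hx⟩ := Finset.card_eq_one.mp hC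
    rw [hx, Finset.mem_singleton] at hmem hj
    omega
  intro i h1 h2
  constructor
  · by_contra hcon
    push_neg at hcon
    obtain ⟨j, hj0, hji, hT, hup, -⟩ :=
      crossing p ((m : ℤ) - 1) i (fb m p) h2 hcon (by omega)
    have hjF : j - 1 ∈ Fil := by
      rw [hFil, Finset.mem_filter, Finset.mem_range, show j - 1 + 1 = j by omega]
      refine ⟨by omega, hup, ?_⟩
      rw [hT, cast_m1 hm, Int.emod_eq_of_lt (by omega) (by omega)]
    have := huniq _ hjF
    omega
  · by_contra hcon
    push_neg at hcon
    obtain ⟨j, hj0, hji, hT, hup, -⟩ :=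
      crossing p (2 * (m : ℤ) - 1) (fa m p) i h1 (by omega) (by omega)
    have hjF : j - 1 ∈ Fil := by
      rw [hFil, Finset.mem_filter, Finset.mem_range, show j - 1 + 1 = j by omega]
      refine ⟨by omega, hup, ?_⟩
      have : (2 * (m : ℤ) - 1) % (m : ℤ) = (m : ℤ) - 1 := by
        have h1' : (2 * (m : ℤ) - 1) = ((m : ℤ) - 1) + (m : ℤ) * 1 := by ring
        rw [h1', Int.add_mul_emod_self_left, Int.emod_eq_of_lt (by omega) (by omega)]
      rw [hT, cast_m1 hm, this]
    have := huniq _ hjF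
    omega


/-! ### Membership transfer -/

lemma D_to_C {m n : ℕ} {p : List Bool} (hm : 2 ≤ m) (hn : 1 ≤ n)
    (hD : IsDyckPath n p ∧ (upStepsMod m 0 p = 0 ∧ upStepsMod m (m - 1) p ≠ 0)) :
    IsDyckPath n (F m p) ∧ upStepsMod m (m - 1) (F m p) = 1 := by
  obtain ⟨hd, h0, hne0⟩ := hD
  have hne := exists_top hm hd hne0
  have hb1 := bound_of_no0 hm hd h0
  have hm' : (2 : ℤ) ≤ (m : ℤ) := by exact_mod_cast hm
  exact ⟨F_dyck hm hd hne (fun i _ _ => by have := hb1 i; omega),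
    countD hm hd hn hne hb1⟩

lemma C_to_D {m n : ℕ} {p : List Bool} (hm : 2 ≤ m) (hn : 1 ≤ n)
    (hC : IsDyckPath n p ∧ upStepsMod m (m - 1) p = 1) :
    IsDyckPath n (F m p) ∧ (upStepsMod m 0 (F m p) = 0 ∧ upStepsMod m (m - 1) (F m p) ≠ 0) := by
  obtain ⟨hd, h1⟩ := hC
  have hne : (topSet m p).Nonempty := exists_top hm hd (by omega)
  have hbounds := countC_bounds hm hd hn h1
  have hm' : (2 : ℤ) ≤ (m : ℤ) := by exact_mod_cast hm
  obtain ⟨hab, hblen, haeq, hbeq, hlow, hhigh, ha1⟩ := top_facts hm hd hne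
  obtain ⟨hL, hM, hR, hlen⟩ := F_facts hm hd hne
  have hqd : IsDyckPath n (F m p) :=
    F_dyck hm hd hne (fun i hi1 hi2 => by have := (hbounds i hi1 hi2).2; omega)
  have hqb : ∀ i, ht (F m p) i ≤ (m : ℤ) - 1 := by
    intro i
    rcases le_or_gt i (fa m p) with h | h
    · rw [hL i h]
      rcases eq_or_lt_of_le h with he | hlt
      · rw [he]; omega
      · have := hlow i hlt; omega
    · rcases le_or_gt i (fb m p) with h2 | h2
      · rw [hM i (by omega) h2]
        have := (hbounds i (by omega) h2).1
        omega
      · rw [hR i (by omega)]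
        have := hhigh i h2
        omega
  refine ⟨hqd, no0_of_bound hm (dyck_nonneg hqd) hqb, ?_⟩
  intro hcon
  have hball := bound_of_nom1 hm hqd hcon
  have := hball (fa m p)
  rw [hL _ le_rfl, haeq] at this
  omega

lemma D_invol {m n : ℕ} {p : List Bool} (hm : 2 ≤ m)
    (hD : IsDyckPath n p ∧ (upStepsMod m 0 p = 0 ∧ upStepsMod m (m - 1) p ≠ 0)) :
    F m (F m p) = p :=
  (F_invol hm hD.1 (exists_top hm hD.1 hD.2.2)).2.2.2

lemma C_invol {m n : ℕ} {p : List Bool} (hm : 2 ≤ m)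
    (hC : IsDyckPath n p ∧ upStepsMod m (m - 1) p = 1) :
    F m (F m p) = p :=
  (F_invol hm hC.1 (exists_top hm hC.1 (by omega))).2.2.2

end DyckFlip

/-- For `m ≥ 2`, the number of Dyck paths of semilength `n` with no up steps at height
`h ≡ 0 (mod m)` equals the number with no up steps at height `h ≡ m-1 (mod m)` plus
the number with exactly one up step at height `h ≡ m-1 (mod m)`. -/
theorem upSteps_mod_m_zero_case (m n : ℕ) (hm : 2 ≤ m) (hn : 1 ≤ n) :
    Nat.card {p : List Bool // IsDyckPath n p ∧ upStepsMod m 0 p = 0} =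
      Nat.card {p : List Bool // IsDyckPath n p ∧ upStepsMod m (m - 1) p = 0} +
        Nat.card {p : List Bool // IsDyckPath n p ∧ upStepsMod m (m - 1) p = 1} := by
  classical
  have hfin : ∀ Q : List Bool → Prop, {p : List Bool | IsDyckPath n p ∧ Q p}.Finite := by
    intro Q
    apply Set.Finite.subset (List.finite_length_eq Bool (2 * n))
    intro p hp
    exact hp.1.1
  have hcard : ∀ P : List Bool → Prop,
      Nat.card {p : List Bool // P p} = {p : List Bool | P p}.ncard := fun P =>
    Nat.card_coe_set_eq _
  have key1 : {p : List Bool | IsDyckPath n p ∧ upStepsMod m 0 p = 0} =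
      {p : List Bool | IsDyckPath n p ∧ upStepsMod m (m - 1) p = 0} ∪
      {p : List Bool | IsDyckPath n p ∧
        (upStepsMod m 0 p = 0 ∧ upStepsMod m (m - 1) p ≠ 0)} := by
    ext p
    simp only [Set.mem_setOf_eq, Set.mem_union]
    constructor
    · rintro ⟨hd, h0⟩
      rcases eq_or_ne (upStepsMod m (m - 1) p) 0 with h | h
      · exact Or.inl ⟨hd, h⟩
      · exact Or.inr ⟨hd, h0, h⟩
    · rintro (⟨hd, h⟩ | ⟨hd, h0, h⟩)
      · refine ⟨hd, DyckFlip.no0_of_bound hm (DyckFlip.dyck_nonneg hd) (fun i => ?_)⟩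
        have := DyckFlip.bound_of_nom1 hm hd h i
        omega
      · exact ⟨hd, h0⟩
  have hdisj : Disjoint
      {p : List Bool | IsDyckPath n p ∧ upStepsMod m (m - 1) p = 0}
      {p : List Bool | IsDyckPath n p ∧
        (upStepsMod m 0 p = 0 ∧ upStepsMod m (m - 1) p ≠ 0)} := by
    rw [Set.disjoint_left]
    rintro p ⟨hd, h⟩ ⟨hd2, h0, hne⟩
    exact hne h
  have hDC : Nat.card {p : List Bool // IsDyckPath n p ∧
        (upStepsMod m 0 p = 0 ∧ upStepsMod m (m - 1) p ≠ 0)} =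
      Nat.card {p : List Bool // IsDyckPath n p ∧ upStepsMod m (m - 1) p = 1} := by
    apply Nat.card_congr
    refine Equiv.mk
      (fun x => ⟨DyckFlip.F m x.1, DyckFlip.D_to_C hm hn x.2⟩)
      (fun x => ⟨DyckFlip.F m x.1, DyckFlip.C_to_D hm hn x.2⟩)
      (fun x => Subtype.ext (DyckFlip.D_invol hm x.2))
      (fun x => Subtype.ext (DyckFlip.C_invol hm x.2))
  rw [hcard, hcard, key1,
    Set.ncard_union_eq hdisj (hfin _) (hfin _), ← hcard, ← hcard, hDC]
end

section
/- For every m ≥ 2 and n ≥ 1, the number of Dyck paths of semilength n with no up steps at height h ≡ m-1 (mod m) equals the number of Dyck paths of semilength n whose height is at most m-2. -/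
def HeightLE (p : List Bool) (H : ℕ) : Prop :=
  ∀ i, (p.take i).count true ≤ (p.take i).count false + H

lemma count_take_succ (p : List Bool) (i : ℕ) (hi : i < p.length) (b : Bool) :
    (p.take (i+1)).count b = (p.take i).count b + if p.getD i false = b then 1 else 0 := by
  rw [List.take_succ, List.count_append, List.getElem?_eq_getElem hi,
    List.getD_eq_getElem _ _ hi]
  simp [List.count_singleton']

lemma key (m : ℕ) (hm : 2 ≤ m) (p : List Bool) :
    upStepsMod m (m-1) p = 0 ↔ HeightLE p (m-2) := by
  constructor
  · intro h0 i
    induction i with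
    | zero => simp
    | succ i ih =>
      by_cases hi : i < p.length
      · have hct := count_take_succ p i hi true
        have hcf := count_take_succ p i hi false
        by_cases hb : p.getD i false = true
        · rw [if_pos hb] at hct
          rw [if_neg (by rw [hb]; simp)] at hcf
          by_cases heq : (p.take i).count true = (p.take i).count false + (m-2)
          · exfalso
            have hmem : i ∈ (Finset.range p.length).filter
                (fun i => p.getD i false = true ∧ stepHeight p i % m = m-1) := by
              refine Finset.mem_filter.mpr ⟨Finset.mem_range.mpr hi, hb, ?_⟩
              have hs : stepHeight p i = m - 1 := by
                unfold stepHeight; rw [hct, hcf]; omega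
              rw [hs, Nat.mod_eq_of_lt (by omega)]
            unfold upStepsMod at h0
            rw [Finset.card_eq_zero] at h0
            rw [h0] at hmem
            exact absurd hmem (Finset.notMem_empty i)
          · omega
        · simp only [Bool.not_eq_true] at hb
          rw [if_neg (by rw [hb]; simp)] at hct
          rw [if_pos hb] at hcf
          omega
      · have heq : p.take (i+1) = p.take i := by
          rw [List.take_of_length_le (by omega), List.take_of_length_le (by omega)]
        rw [heq]; exact ih
  · intro hH
    unfold upStepsMod
    rw [Finset.card_eq_zero, Finset.filter_eq_empty_iff]
    rintro i hi ⟨hb, hmod⟩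
    have h1 := hH (i+1)
    have hs : stepHeight p i ≤ m - 2 := by unfold stepHeight; omega
    rw [Nat.mod_eq_of_lt (by omega)] at hmod
    omega

/-- For `m ≥ 2`, the number of Dyck paths of semilength `n` with no up steps at height
`h ≡ m-1 (mod m)` equals the number of Dyck paths of semilength `n` of height at most
`m - 2`. -/
theorem no_upSteps_mod_m_eq_bounded_height (m n : ℕ) (hm : 2 ≤ m) (hn : 1 ≤ n) :
    Nat.card {p : List Bool // IsDyckPath n p ∧ upStepsMod m (m - 1) p = 0} =
      Nat.card {p : List Bool // IsDyckPath n p ∧ HeightLE p (m - 2)} := by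
  exact Nat.card_congr (Equiv.subtypeEquivRight fun p =>
    and_congr_right fun _ => key m hm p)
end

section
/- For every m ≥ 2, n ≥ 1, j ≥ 1 and k ≥ 0, the number of Dyck paths of semilength n with exactly j up steps at height h ≡ m-1 (mod m) and exactly k up steps at height h ≡ 0 (mod m) equals the number of Dyck paths of semilength n with exactly k+1 up steps at height h ≡ m-1 (mod m) and exactly j-1 up steps at height h ≡ 0 (mod m). -/
namespace DyckSwap

def stepz (b : Bool) : ℤ := if b then 1 else -1

def relh (l : List Bool) : ℤ := (l.map stepz).sum

@[simp] lemma relh_nil : relh [] = 0 := rfl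

@[simp] lemma relh_cons (x : Bool) (l : List Bool) : relh (x :: l) = stepz x + relh l := by
  simp [relh]

lemma relh_append (l₁ l₂ : List Bool) : relh (l₁ ++ l₂) = relh l₁ + relh l₂ := by
  simp [relh]

@[simp] lemma stepz_not (x : Bool) : stepz (!x) = - stepz x := by cases x <;> simp [stepz]

@[simp] lemma stepz_false : stepz false = -1 := rfl
@[simp] lemma stepz_true : stepz true = 1 := rfl

lemma relh_map_not (l : List Bool) : relh (l.map not) = - relh l := by
  induction l with
  | nil => simp
  | cons x r ih => simp [ih]; ring

lemma relh_eq_counts (l : List Bool) :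
    relh l = (l.count true : ℤ) - (l.count false : ℤ) := by
  induction l with
  | nil => simp
  | cons x r ih =>
    cases x <;> simp [List.count_cons, ih, stepz] <;> push_cast <;> ring

lemma count_true_add_count_false (l : List Bool) :
    l.count true + l.count false = l.length := by
  induction l with
  | nil => simp
  | cons x r ih => cases x <;> simp [List.count_cons] <;> omega

lemma relh_take_append (l₁ l₂ : List Bool) (i : ℕ) :
    relh ((l₁ ++ l₂).take (l₁.length + i)) = relh l₁ + relh (l₂.take i) := by
  rw [show (l₁ ++ l₂).take (l₁.length + i) = l₁ ++ l₂.take i by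
    simp [List.take_append], relh_append]

lemma dyck_iff (n : ℕ) (p : List Bool) :
    IsDyckPath n p ↔ p.length = 2 * n ∧ relh p = 0 ∧ ∀ i, 0 ≤ relh (p.take i) := by
  constructor
  · rintro ⟨h1, h2, h3⟩
    refine ⟨h1, ?_, fun i => ?_⟩
    · rw [relh_eq_counts]
      have := count_true_add_count_false p
      omega
    · rw [relh_eq_counts]
      have := h3 i
      omega
  · rintro ⟨h1, h2, h3⟩
    have hc := count_true_add_count_false p
    rw [relh_eq_counts] at h2
    refine ⟨h1, by omega, fun i => ?_⟩
    have := h3 i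
    rw [relh_eq_counts] at this
    omega

def myU (m : ℕ) (c : ℤ) : ℤ → List Bool → ℕ
  | _, [] => 0
  | u, x :: r => (if x = true ∧ (u + 1) % (m : ℤ) = c then 1 else 0) + myU m c (u + stepz x) r

@[simp] lemma myU_nil (m : ℕ) (c u : ℤ) : myU m c u [] = 0 := rfl

lemma myU_cons (m : ℕ) (c u : ℤ) (x : Bool) (r : List Bool) :
    myU m c u (x :: r)
      = (if x = true ∧ (u + 1) % (m : ℤ) = c then 1 else 0) + myU m c (u + stepz x) r := rfl

lemma myU_append (m : ℕ) (c : ℤ) (p q : List Bool) : ∀ u : ℤ,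
    myU m c u (p ++ q) = myU m c u p + myU m c (u + relh p) q := by
  induction p with
  | nil => intro u; simp
  | cons x r ih =>
    intro u
    simp only [List.cons_append, myU_cons, ih, relh_cons]
    ring_nf

lemma myU_pos (m : ℕ) (c : ℤ) (p : List Bool) : ∀ u : ℤ,
    0 < myU m c u p → ∃ i, (u + relh (p.take i)) % (m : ℤ) = c := by
  induction p with
  | nil => intro u h; simp at h
  | cons x r ih =>
    intro u h
    rw [myU_cons] at h
    by_cases hx : x = true ∧ (u + 1) % (m : ℤ) = c
    · exact ⟨1, by simpa [hx.1, stepz] using hx.2⟩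
    · rw [if_neg hx] at h
      obtain ⟨i, hi⟩ := ih (u + stepz x) (by omega)
      exact ⟨i + 1, by simpa [List.take_succ_cons, add_assoc] using hi⟩

lemma filter_range_succ (P : ℕ → Prop) [DecidablePred P] (n : ℕ) :
    ((Finset.range (n+1)).filter P).card
      = (if P 0 then 1 else 0) + ((Finset.range n).filter (fun i => P (i+1))).card := by
  simp only [Finset.card_filter]
  rw [Finset.sum_range_succ']
  ring

lemma toNat_mod_iff {u : ℤ} (h1 : 0 ≤ u) (m c : ℕ) :
    (u.toNat % m = c) ↔ (u % (m : ℤ) = (c : ℤ)) := by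
  constructor
  · intro h
    rw [← Int.toNat_of_nonneg h1, ← Int.natCast_mod, h]
  · intro h
    have h2 : ((u.toNat : ℤ)) % (m : ℤ) = (c : ℤ) := by rw [Int.toNat_of_nonneg h1]; exact h
    rw [← Int.natCast_mod] at h2
    exact_mod_cast h2

lemma count_eq_myU (m c : ℕ) (p : List Bool) : ∀ u : ℤ,
    (∀ i, 0 ≤ u + relh (p.take i)) →
    ((Finset.range p.length).filter
      (fun i => p.getD i false = true ∧ (u + relh (p.take (i+1))).toNat % m = c)).card
      = myU m (c : ℤ) u p := by
  induction p with
  | nil => intro u _; simp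
  | cons x r ih =>
    intro u hu
    rw [List.length_cons, filter_range_succ, myU_cons]
    congr 1
    · by_cases hx : x = true
      · subst hx
        have h1 : (0:ℤ) ≤ u + 1 := by
          have := hu 1
          simpa [stepz] using this
        have hmod := toNat_mod_iff h1 m c
        simp [stepz, hmod]
      · simp [hx]
    · have hrec := ih (u + stepz x) (fun i => by simpa [add_assoc] using hu (i+1))
      rw [← hrec]
      refine congrArg Finset.card (Finset.filter_congr ?_)
      intro i _
      simp [List.take_succ_cons, add_assoc]


lemma upStepsMod_eq_myU (m c : ℕ) (p : List Bool)
    (hp : ∀ i, 0 ≤ relh (p.take i)) :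
    upStepsMod m c p = myU m (c : ℤ) 0 p := by
  rw [← count_eq_myU m c p 0 (fun i => by simpa using hp i)]
  refine congrArg Finset.card (Finset.filter_congr ?_)
  intro i _
  have hsh : stepHeight p i = (0 + relh (p.take (i+1))).toNat := by
    rw [stepHeight, relh_eq_counts, zero_add]
    omega
  rw [hsh]

/-- Walk within the strip `[0, m-2]`, from relative height `a` to `b`. -/
def Strip (m : ℕ) (a b : ℤ) (w : List Bool) : Prop :=
  (∀ i, 0 ≤ a + relh (w.take i) ∧ a + relh (w.take i) ≤ (m : ℤ) - 2) ∧ a + relh w = b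

lemma strip_not {m : ℕ} {a b : ℤ} {w : List Bool}
    (h : Strip m a b w) : Strip m ((m:ℤ) - 2 - a) ((m:ℤ) - 2 - b) (w.map not) := by
  obtain ⟨h1, h2⟩ := h
  constructor
  · intro i
    rw [← List.map_take, relh_map_not]
    have := h1 i
    omega
  · rw [relh_map_not]
    omega

lemma myU_strip_zero {m : ℕ} (hm : 2 ≤ m) (c : ℤ) (hc : c = 0 ∨ c = (m:ℤ) - 1)
    (q : ℤ) (hq : q % (m:ℤ) = 0) (w : List Bool) : ∀ u : ℤ,
    (∀ i, q ≤ u + relh (w.take i) ∧ u + relh (w.take i) ≤ q + ((m:ℤ) - 2)) →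
    myU m c u w = 0 := by
  induction w with
  | nil => intro u _; simp
  | cons x r ih =>
    intro u hw
    rw [myU_cons]
    have h0 := hw 0
    simp only [List.take_zero, relh_nil, add_zero] at h0
    have hrec := ih (u + stepz x) (fun i => by
      have := hw (i + 1)
      simpa [List.take_succ_cons, add_assoc] using this)
    rw [hrec, add_zero]
    by_cases hx : x = true
    · have h1 := hw 1
      subst hx
      simp only [List.take_succ_cons, List.take_zero, relh_cons, relh_nil, stepz, if_true,
        add_zero] at h1
      -- (u+1) % m = (u+1-q) % m = u+1-q ∈ [1, m-2]
      have hd : (u + 1) % (m:ℤ) = u + 1 - q := by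
        have : u + 1 - q ≥ 0 ∧ u + 1 - q < (m:ℤ) := by omega
        calc (u + 1) % (m:ℤ) = (q + (u + 1 - q)) % (m:ℤ) := by ring_nf
        _ = ((q % (m:ℤ)) + (u + 1 - q) % (m:ℤ)) % (m:ℤ) := by rw [Int.add_emod]
        _ = (u + 1 - q) % (m:ℤ) := by rw [hq]; simp
        _ = u + 1 - q := Int.emod_emod_of_dvd _ (dvd_refl _) ▸ Int.emod_eq_of_lt this.1 this.2
      rw [if_neg]
      rintro ⟨-, hcc⟩
      rw [hd] at hcc
      omega
    · rw [if_neg (by simp [hx])]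

/-- Splits a walk at the first step leaving the window `[lo, hi]`
(heights tracked starting from `u`). -/
def splitW (lo hi : ℤ) (u : ℤ) : List Bool → Option (List Bool × Bool × List Bool)
  | [] => none
  | x :: r =>
    if lo ≤ u + stepz x ∧ u + stepz x ≤ hi then
      (splitW lo hi (u + stepz x) r).map (fun y => (x :: y.1, y.2.1, y.2.2))
    else some ([], x, r)

lemma splitW_none {lo hi : ℤ} : ∀ (z : List Bool) (u : ℤ),
    splitW lo hi u z = none → lo ≤ u → u ≤ hi →
    ∀ i, lo ≤ u + relh (z.take i) ∧ u + relh (z.take i) ≤ hi := by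
  intro z
  induction z with
  | nil => intro u _ h1 h2 i; simp [h1, h2]
  | cons x r ih =>
    intro u hs h1 h2 i
    rw [splitW] at hs
    by_cases hw : lo ≤ u + stepz x ∧ u + stepz x ≤ hi
    · rw [if_pos hw] at hs
      have hrec : splitW lo hi (u + stepz x) r = none := by
        cases hh : splitW lo hi (u + stepz x) r
        · rfl
        · rw [hh] at hs; simp at hs
      cases i with
      | zero => simp [h1, h2]
      | succ i =>
        have := ih (u + stepz x) hrec hw.1 hw.2 i
        simpa [List.take_succ_cons, add_assoc] using this
    · rw [if_neg hw] at hs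
      simp at hs

lemma splitW_some {lo hi : ℤ} : ∀ (z : List Bool) (u : ℤ) (w : List Bool) (b : Bool)
    (rest : List Bool),
    splitW lo hi u z = some (w, b, rest) → lo ≤ u → u ≤ hi →
    z = w ++ b :: rest ∧
    (∀ i, lo ≤ u + relh (w.take i) ∧ u + relh (w.take i) ≤ hi) ∧
    ¬(lo ≤ u + relh w + stepz b ∧ u + relh w + stepz b ≤ hi) := by
  intro z
  induction z with
  | nil => intro u w b rest hs; simp [splitW] at hs
  | cons x r ih =>
    intro u w b rest hs h1 h2
    rw [splitW] at hs
    by_cases hw : lo ≤ u + stepz x ∧ u + stepz x ≤ hi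
    · rw [if_pos hw] at hs
      cases hh : splitW lo hi (u + stepz x) r with
      | none => rw [hh] at hs; simp at hs
      | some y =>
        rw [hh] at hs
        obtain ⟨w', b', rest'⟩ := y
        simp only [Option.map_some, Option.some.injEq, Prod.mk.injEq] at hs
        obtain ⟨hw1, hb1, hr1⟩ := hs
        obtain ⟨he, hwin, hexit⟩ := ih (u + stepz x) w' b' rest' hh hw.1 hw.2
        subst hw1; subst hb1; subst hr1
        refine ⟨by simp [he], fun i => ?_, ?_⟩
        · cases i with
          | zero => simp [h1, h2]
          | succ i =>
            have := hwin i
            simpa [List.take_succ_cons, add_assoc] using this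
        · simp only [relh_cons]
          intro hcon
          refine hexit ⟨by omega, by omega⟩
    · rw [if_neg hw] at hs
      simp only [Option.some.injEq, Prod.mk.injEq] at hs
      obtain ⟨hw1, hb1, hr1⟩ := hs
      subst hw1; subst hb1; subst hr1
      refine ⟨by simp, fun i => by simp [h1, h2], by simpa using hw⟩

lemma splitW_roundtrip {lo hi : ℤ} (b : Bool) (rest : List Bool) :
    ∀ (w : List Bool) (u : ℤ),
    (∀ i, lo ≤ u + relh (w.take i) ∧ u + relh (w.take i) ≤ hi) →
    ¬(lo ≤ u + relh w + stepz b ∧ u + relh w + stepz b ≤ hi) →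
    splitW lo hi u (w ++ b :: rest) = some (w, b, rest) := by
  intro w
  induction w with
  | nil =>
    intro u _ hexit
    rw [List.nil_append, splitW, if_neg (by simpa using hexit)]
  | cons x r ih =>
    intro u hwin hexit
    have h1 : lo ≤ u + stepz x ∧ u + stepz x ≤ hi := by
      have := hwin 1
      simpa using this
    rw [List.cons_append, splitW, if_pos h1]
    rw [ih (u + stepz x) (fun i => by simpa [List.take_succ_cons, add_assoc] using hwin (i+1))
      (by simpa [add_assoc] using hexit)]
    rfl

abbrev Blk := (Bool × Bool) × List Bool

def evalB : List Blk → List Bool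
  | [] => []
  | B :: bs => B.1.1 :: (B.2 ++ B.1.2 :: evalB bs)

def validB (m : ℕ) : ℕ → List Blk → Prop
  | l, [] => l = 0
  | l, ((true, true), w) :: bs => Strip m 0 ((m:ℤ)-2) w ∧ validB m (l+1) bs
  | l, ((true, false), w) :: bs => Strip m 0 0 w ∧ validB m l bs
  | l, ((false, true), w) :: bs => Strip m ((m:ℤ)-2) ((m:ℤ)-2) w ∧ validB m l bs
  | l, ((false, false), w) :: bs => ∃ l', l = l' + 1 ∧ Strip m ((m:ℤ)-2) 0 w ∧ validB m l' bs

def cnt (v : Bool × Bool) (bs : List Blk) : ℕ := bs.countP (fun B => B.1 = v)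

@[simp] lemma cnt_nil (v : Bool × Bool) : cnt v [] = 0 := rfl

lemma cnt_cons (v : Bool × Bool) (B : Blk) (bs : List Blk) :
    cnt v (B :: bs) = (if B.1 = v then 1 else 0) + cnt v bs := by
  simp [cnt, List.countP_cons]
  by_cases h : B.1 = v <;> simp [h] <;> omega

def aH (m l : ℕ) : ℤ := (l : ℤ) * m + m - 1

lemma aH_succ (m l : ℕ) : aH m (l+1) = aH m l + m := by
  unfold aH; push_cast; ring

lemma aH_pos {m : ℕ} (hm : 2 ≤ m) (l : ℕ) : 1 ≤ aH m l := by
  unfold aH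
  have h1 : (0:ℤ) ≤ (l:ℤ) * m := by positivity
  have h2 : (2:ℤ) ≤ m := by exact_mod_cast hm
  omega

lemma aH_ge {m : ℕ} (hm : 2 ≤ m) (l : ℕ) : (m:ℤ) - 1 ≤ aH m l := by
  unfold aH
  have h1 : (0:ℤ) ≤ (l:ℤ) * m := by positivity
  omega

lemma aH_mod {m : ℕ} (hm : 2 ≤ m) (l : ℕ) : aH m l % (m:ℤ) = (m:ℤ) - 1 := by
  unfold aH
  rw [show (l:ℤ)*m + m - 1 = ((m:ℤ) - 1) + (m:ℤ)*l by ring, Int.add_mul_emod_self_left]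
  have h2 : (2:ℤ) ≤ m := by exact_mod_cast hm
  exact Int.emod_eq_of_lt (by omega) (by omega)

lemma aH_succ_mod {m : ℕ} (hm : 2 ≤ m) (l : ℕ) : (aH m l + 1) % (m:ℤ) = 0 := by
  unfold aH
  rw [show (l:ℤ)*m + m - 1 + 1 = ((l:ℤ)+1) * m by ring, Int.mul_emod_left]

lemma relh_take_trichotomy (x y : Bool) (w t' : List Bool) (i : ℕ) :
    relh ((x :: (w ++ y :: t')).take i) = 0 ∨
    (∃ j, relh ((x :: (w ++ y :: t')).take i) = stepz x + relh (w.take j)) ∨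
    (∃ k, relh ((x :: (w ++ y :: t')).take i)
        = stepz x + relh w + stepz y + relh (t'.take k)) := by
  cases i with
  | zero => left; simp
  | succ i =>
    rw [List.take_succ_cons, relh_cons, List.take_append, relh_append]
    cases hk : i - w.length with
    | zero =>
      right; left
      exact ⟨i, by simp⟩
    | succ k =>
      right; right
      refine ⟨k, ?_⟩
      have hlen : w.length ≤ i := by omega
      rw [List.take_succ_cons, relh_cons, List.take_of_length_le hlen]
      ring

lemma myU_block {m : ℕ} (hm : 2 ≤ m) (c : ℤ) (hc : c = 0 ∨ c = (m:ℤ) - 1)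
    (A q : ℤ) (a b : Bool) (w t' : List Bool) (hq : q % (m:ℤ) = 0)
    (hwin : ∀ i, q ≤ A + stepz a + relh (w.take i) ∧
      A + stepz a + relh (w.take i) ≤ q + ((m:ℤ) - 2)) :
    myU m c A (a :: (w ++ b :: t'))
      = (if a = true ∧ (A + 1) % (m:ℤ) = c then 1 else 0)
        + (if b = true ∧ (A + stepz a + relh w + 1) % (m:ℤ) = c then 1 else 0)
        + myU m c (A + stepz a + relh w + stepz b) t' := by
  rw [myU_cons, myU_append, myU_cons, myU_strip_zero hm c hc q hq w (A + stepz a) hwin]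
  ring

lemma master {m : ℕ} (hm : 2 ≤ m) : ∀ (bs : List Blk) (l : ℕ) (wr : List Bool),
    validB m l bs → Strip m ((m:ℤ)-2) 0 wr →
    relh (evalB bs ++ false :: wr) = -(aH m l) ∧
    (∀ i, -(aH m l) ≤ relh ((evalB bs ++ false :: wr).take i)) ∧
    myU m ((m:ℤ)-1) (aH m l) (evalB bs ++ false :: wr)
      = cnt (true,true) bs + cnt (false,true) bs ∧
    myU m 0 (aH m l) (evalB bs ++ false :: wr)
      = cnt (true,true) bs + cnt (true,false) bs := by
  have hm2 : (2:ℤ) ≤ m := by exact_mod_cast hm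
  intro bs
  induction bs with
  | nil =>
    intro l wr hv hwr
    have hl : l = 0 := hv
    subst hl
    obtain ⟨hwin, hend⟩ := hwr
    have hA : aH m 0 = (m:ℤ) - 1 := by unfold aH; push_cast; ring
    have hA0 := aH_pos hm 0
    have hzero : ∀ c : ℤ, c = 0 ∨ c = (m:ℤ) - 1 →
        myU m c (aH m 0) (evalB [] ++ false :: wr) = 0 := by
      intro c hc
      simp only [evalB, List.nil_append, myU_cons, stepz_false]
      rw [if_neg (by simp), myU_strip_zero hm c hc 0 (by simp) wr (aH m 0 + -1)
        (fun i => by have h := hwin i; rw [hA]; omega)]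
    refine ⟨?_, ?_, ?_, ?_⟩
    · simp only [evalB, List.nil_append, relh_cons, stepz_false]
      rw [hA]
      omega
    · intro i
      simp only [evalB, List.nil_append]
      cases i with
      | zero => simp only [List.take_zero, relh_nil]; omega
      | succ i =>
        rw [List.take_succ_cons, relh_cons]
        have h := hwin i
        rw [hA]
        simp only [stepz_false]
        omega
    · rw [hzero ((m:ℤ)-1) (Or.inr rfl)]; simp
    · rw [hzero 0 (Or.inl rfl)]; simp
  | cons B bs' ih =>
    intro l wr hv hwr
    obtain ⟨⟨a, b⟩, w⟩ := B
    have hApos := aH_pos hm l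
    have hAge := aH_ge hm l
    cases a <;> cases b
    · -- (false, false) : fall
      obtain ⟨l', hl, hw, hv'⟩ := hv
      subst hl
      obtain ⟨E1, E2, E3, E4⟩ := ih l' wr hv' hwr
      have hE : evalB (((false,false),w) :: bs') ++ false :: wr
          = false :: (w ++ false :: (evalB bs' ++ false :: wr)) := by simp [evalB]
      have hApos' := aH_pos hm l'
      have hrelw : relh w = -((m:ℤ) - 2) := by have := hw.2; omega
      have hA : aH m (l'+1) = aH m l' + m := aH_succ m l'
      have hbase : aH m (l'+1) + stepz false + relh w + stepz false = aH m l' := by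
        simp only [stepz_false, hrelw, hA]; ring
      have hq : (aH m (l'+1) + 1 - m) % (m:ℤ) = 0 := by
        rw [show aH m (l'+1) + 1 - m = aH m l' + 1 by rw [hA]; ring, aH_succ_mod hm]
      have hwin : ∀ i, (aH m (l'+1) + 1 - m) ≤ aH m (l'+1) + stepz false + relh (w.take i) ∧
          aH m (l'+1) + stepz false + relh (w.take i)
            ≤ (aH m (l'+1) + 1 - m) + ((m:ℤ) - 2) := by
        intro i
        have := hw.1 i
        simp only [stepz_false]
        omega
      refine ⟨?_, ?_, ?_, ?_⟩
      · rw [hE, relh_cons, relh_append, relh_cons, E1, hrelw, hA]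
        simp only [stepz_false]
        ring
      · intro i
        rw [hE, hA]
        rcases relh_take_trichotomy false false w (evalB bs' ++ false :: wr) i
          with h | ⟨j, h⟩ | ⟨k, h⟩
        · rw [h]; omega
        · have h1 := hw.1 j
          rw [h]; simp only [stepz_false]; omega
        · have h1 := E2 k
          rw [h]; simp only [stepz_false]; omega
      · rw [hE, myU_block hm _ (Or.inr rfl) _ _ false false w _ hq hwin, hbase, E3]
        simp [cnt_cons]
      · rw [hE, myU_block hm _ (Or.inl rfl) _ _ false false w _ hq hwin, hbase, E4]
        simp [cnt_cons]
    · -- (false, true) : down excursion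
      obtain ⟨hw, hv'⟩ := hv
      obtain ⟨E1, E2, E3, E4⟩ := ih l wr hv' hwr
      have hE : evalB (((false,true),w) :: bs') ++ false :: wr
          = false :: (w ++ true :: (evalB bs' ++ false :: wr)) := by simp [evalB]
      have hrelw : relh w = 0 := by have := hw.2; omega
      have hbase : aH m l + stepz false + relh w + stepz true = aH m l := by
        simp only [stepz_false, stepz_true, hrelw]; ring
      have hq : (aH m l + 1 - m) % (m:ℤ) = 0 := by
        rw [show aH m l + 1 - m = (aH m l + 1) + (m:ℤ) * (-1) by ring,
          Int.add_mul_emod_self_left, aH_succ_mod hm]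
      have hwin : ∀ i, (aH m l + 1 - m) ≤ aH m l + stepz false + relh (w.take i) ∧
          aH m l + stepz false + relh (w.take i) ≤ (aH m l + 1 - m) + ((m:ℤ) - 2) := by
        intro i
        have := hw.1 i
        simp only [stepz_false]
        omega
      have hcross : (aH m l + stepz false + relh w + 1) % (m:ℤ) = (m:ℤ) - 1 := by
        rw [show aH m l + stepz false + relh w + 1 = aH m l by
          simp only [stepz_false, hrelw]; ring, aH_mod hm]
      refine ⟨?_, ?_, ?_, ?_⟩
      · rw [hE, relh_cons, relh_append, relh_cons, E1, hrelw]
        simp only [stepz_false, stepz_true]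
        ring
      · intro i
        rw [hE]
        rcases relh_take_trichotomy false true w (evalB bs' ++ false :: wr) i
          with h | ⟨j, h⟩ | ⟨k, h⟩
        · rw [h]; omega
        · have h1 := hw.1 j
          rw [h]; simp only [stepz_false, stepz_true]; omega
        · have h1 := E2 k
          rw [h]; simp only [stepz_false, stepz_true, hrelw]; omega
      · rw [hE, myU_block hm _ (Or.inr rfl) _ _ false true w _ hq hwin, hbase, E3]
        rw [if_neg (by simp), if_pos ⟨rfl, hcross⟩]
        simp [cnt_cons]
        omega
      · rw [hE, myU_block hm _ (Or.inl rfl) _ _ false true w _ hq hwin, hbase, E4]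
        rw [if_neg (by simp), if_neg (by rw [hcross]; rintro ⟨-, h⟩; omega)]
        simp [cnt_cons]
    · -- (true, false) : up excursion
      obtain ⟨hw, hv'⟩ := hv
      obtain ⟨E1, E2, E3, E4⟩ := ih l wr hv' hwr
      have hE : evalB (((true,false),w) :: bs') ++ false :: wr
          = true :: (w ++ false :: (evalB bs' ++ false :: wr)) := by simp [evalB]
      have hrelw : relh w = 0 := by have := hw.2; omega
      have hbase : aH m l + stepz true + relh w + stepz false = aH m l := by
        simp only [stepz_false, stepz_true, hrelw]; ring
      have hq : (aH m l + 1) % (m:ℤ) = 0 := aH_succ_mod hm l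
      have hwin : ∀ i, (aH m l + 1) ≤ aH m l + stepz true + relh (w.take i) ∧
          aH m l + stepz true + relh (w.take i) ≤ (aH m l + 1) + ((m:ℤ) - 2) := by
        intro i
        have := hw.1 i
        simp only [stepz_true]
        omega
      refine ⟨?_, ?_, ?_, ?_⟩
      · rw [hE, relh_cons, relh_append, relh_cons, E1, hrelw]
        simp only [stepz_false, stepz_true]
        ring
      · intro i
        rw [hE]
        rcases relh_take_trichotomy true false w (evalB bs' ++ false :: wr) i
          with h | ⟨j, h⟩ | ⟨k, h⟩
        · rw [h]; omega
        · have h1 := hw.1 j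
          rw [h]; simp only [stepz_false, stepz_true]; omega
        · have h1 := E2 k
          rw [h]; simp only [stepz_false, stepz_true, hrelw]; omega
      · rw [hE, myU_block hm _ (Or.inr rfl) _ _ true false w _ hq hwin, hbase, E3]
        rw [if_neg (by rw [hq]; rintro ⟨-, h⟩; omega), if_neg (by simp)]
        simp [cnt_cons]
      · rw [hE, myU_block hm _ (Or.inl rfl) _ _ true false w _ hq hwin, hbase, E4]
        rw [if_pos ⟨rfl, hq⟩, if_neg (by simp)]
        simp [cnt_cons]
        omega
    · -- (true, true) : climb
      obtain ⟨hw, hv'⟩ := hv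
      obtain ⟨E1, E2, E3, E4⟩ := ih (l+1) wr hv' hwr
      have hE : evalB (((true,true),w) :: bs') ++ false :: wr
          = true :: (w ++ true :: (evalB bs' ++ false :: wr)) := by simp [evalB]
      have hrelw : relh w = (m:ℤ) - 2 := by have := hw.2; omega
      have hA : aH m (l+1) = aH m l + m := aH_succ m l
      have hbase : aH m l + stepz true + relh w + stepz true = aH m (l+1) := by
        simp only [stepz_true, hrelw, hA]; ring
      have hq : (aH m l + 1) % (m:ℤ) = 0 := aH_succ_mod hm l
      have hwin : ∀ i, (aH m l + 1) ≤ aH m l + stepz true + relh (w.take i) ∧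
          aH m l + stepz true + relh (w.take i) ≤ (aH m l + 1) + ((m:ℤ) - 2) := by
        intro i
        have := hw.1 i
        simp only [stepz_true]
        omega
      have hcross : (aH m l + stepz true + relh w + 1) % (m:ℤ) = (m:ℤ) - 1 := by
        rw [show aH m l + stepz true + relh w + 1 = aH m l + (m:ℤ)*1 by
          simp only [stepz_true, hrelw]; ring, Int.add_mul_emod_self_left, aH_mod hm]
      refine ⟨?_, ?_, ?_, ?_⟩
      · rw [hE, relh_cons, relh_append, relh_cons, E1, hrelw, hA]
        simp only [stepz_true]
        ring
      · intro i
        rw [hE]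
        rcases relh_take_trichotomy true true w (evalB bs' ++ false :: wr) i
          with h | ⟨j, h⟩ | ⟨k, h⟩
        · rw [h]; omega
        · have h1 := hw.1 j
          rw [h]; simp only [stepz_true]; omega
        · have h1 := E2 k
          rw [hA] at h1
          rw [h]; simp only [stepz_true, hrelw]; omega
      · rw [hE, myU_block hm _ (Or.inr rfl) _ _ true true w _ hq hwin, hbase, E3]
        rw [if_neg (by rw [hq]; rintro ⟨-, h⟩; omega), if_pos ⟨rfl, hcross⟩]
        simp [cnt_cons]
        omega
      · rw [hE, myU_block hm _ (Or.inl rfl) _ _ true true w _ hq hwin, hbase, E4]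
        rw [if_pos ⟨rfl, hq⟩, if_neg (by rw [hcross]; rintro ⟨-, h⟩; omega)]
        simp [cnt_cons]
        omega

def flipB (B : Blk) : Blk :=
  if B.1.1 = B.1.2 then B else ((B.1.2, B.1.1), B.2.map not)

def phiB (bs : List Blk) : List Blk := bs.map flipB

lemma flipB_flipB (B : Blk) : flipB (flipB B) = B := by
  obtain ⟨⟨a, b⟩, w⟩ := B
  cases a <;> cases b <;> simp [flipB, List.map_map, Function.comp_def]

lemma phiB_phiB (bs : List Blk) : phiB (phiB bs) = bs := by
  simp [phiB, List.map_map, Function.comp_def, flipB_flipB]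

lemma validB_phiB {m : ℕ} : ∀ (bs : List Blk) (l : ℕ), validB m l bs → validB m l (phiB bs) := by
  intro bs
  induction bs with
  | nil => intro l h; exact h
  | cons B bs' ih =>
    intro l h
    obtain ⟨⟨a, b⟩, w⟩ := B
    cases a <;> cases b
    · obtain ⟨l', hl, hw, hv⟩ := h
      exact ⟨l', hl, hw, ih _ hv⟩
    · obtain ⟨hw, hv⟩ := h
      refine ⟨?_, ih _ hv⟩
      have := strip_not hw
      simpa using this
    · obtain ⟨hw, hv⟩ := h
      refine ⟨?_, ih _ hv⟩
      have := strip_not hw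
      simpa using this
    · obtain ⟨hw, hv⟩ := h
      exact ⟨hw, ih _ hv⟩

lemma cnt_phiB_tt (bs : List Blk) : cnt (true,true) (phiB bs) = cnt (true,true) bs := by
  induction bs with
  | nil => rfl
  | cons B bs' ih =>
    obtain ⟨⟨a, b⟩, w⟩ := B
    cases a <;> cases b <;> simp [phiB, cnt_cons, flipB] at ih ⊢ <;> omega

lemma cnt_phiB_tf (bs : List Blk) : cnt (true,false) (phiB bs) = cnt (false,true) bs := by
  induction bs with
  | nil => rfl
  | cons B bs' ih =>
    obtain ⟨⟨a, b⟩, w⟩ := B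
    cases a <;> cases b <;> simp [phiB, cnt_cons, flipB] at ih ⊢ <;> omega

lemma cnt_phiB_ft (bs : List Blk) : cnt (false,true) (phiB bs) = cnt (true,false) bs := by
  induction bs with
  | nil => rfl
  | cons B bs' ih =>
    obtain ⟨⟨a, b⟩, w⟩ := B
    cases a <;> cases b <;> simp [phiB, cnt_cons, flipB] at ih ⊢ <;> omega

lemma evalB_length_phiB (bs : List Blk) : (evalB (phiB bs)).length = (evalB bs).length := by
  induction bs with
  | nil => rfl
  | cons B bs' ih =>
    obtain ⟨⟨a, b⟩, w⟩ := B
    cases a <;> cases b <;> simp [phiB, evalB, flipB] at ih ⊢ <;> omega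

lemma relh_take_block_exact (x b : Bool) (w rest : List Bool) (i : ℕ) :
    relh ((x :: (w ++ b :: rest)).take (w.length + 2 + i))
      = stepz x + relh w + stepz b + relh (rest.take i) := by
  rw [show w.length + 2 + i = (w.length + (i + 1)) + 1 by ring, List.take_succ_cons,
    relh_cons, List.take_append, relh_append,
    List.take_of_length_le (by omega : w.length ≤ w.length + (i+1)),
    show w.length + (i + 1) - w.length = i + 1 by omega,
    List.take_succ_cons, relh_cons]
  ring

def parseT (m : ℕ) : ℕ → ℕ → List Bool → Option (List Blk × List Bool)
  | 0, _, _ => none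
  | _+1, _, [] => none
  | fuel+1, l, true :: r =>
    match splitW 1 ((m:ℤ)-1) 1 r with
    | none => none
    | some (w, b, rest) =>
      (parseT m fuel (if b then l+1 else l) rest).map
        (fun q => (((true, b), w) :: q.1, q.2))
  | fuel+1, l, false :: r =>
    match splitW (1-(m:ℤ)) (-1) (-1) r with
    | none =>
      match l with
      | 0 => some ([], r)
      | _+1 => none
    | some (w, b, rest) =>
      match b with
      | true => (parseT m fuel l rest).map (fun q => (((false, true), w) :: q.1, q.2))
      | false =>
        match l with
        | 0 => none
        | l'+1 => (parseT m fuel l' rest).map (fun q => (((false, false), w) :: q.1, q.2))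

lemma PT_main {m : ℕ} (hm : 2 ≤ m) : ∀ (fuel : ℕ) (t : List Bool) (l : ℕ),
    t.length < fuel → relh t = -(aH m l) → (∀ i, -(aH m l) ≤ relh (t.take i)) →
    ∃ bs wr, parseT m fuel l t = some (bs, wr) ∧ evalB bs ++ false :: wr = t ∧
      validB m l bs ∧ Strip m ((m:ℤ)-2) 0 wr := by
  have hm2 : (2:ℤ) ≤ m := by exact_mod_cast hm
  intro fuel
  induction fuel with
  | zero => intro t l hlen _ _; omega
  | succ fuel ih =>
    intro t l hlen hrel hpre
    have hApos := aH_pos hm l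
    have hAge := aH_ge hm l
    cases t with
    | nil => exfalso; simp at hrel; omega
    | cons x r =>
      cases x with
      | true =>
        -- the walk must leave the window [1, m-1] above: at the end it is ≤ -aH + something
        cases hsp : splitW 1 ((m:ℤ)-1) 1 r with
        | none =>
          exfalso
          have hall := splitW_none r 1 hsp (le_refl 1) (by omega)
          have hlast := (hall r.length).1
          rw [List.take_of_length_le (le_refl _)] at hlast
          have : relh (true :: r) = 1 + relh r := by rw [relh_cons, stepz_true]
          omega
        | some y =>
          obtain ⟨w, b, rest⟩ := y
          obtain ⟨hz, hwin, hexit⟩ := splitW_some r 1 w b rest hsp (le_refl 1) (by omega)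
          subst hz
          have hwfull := (hwin w.length).1
          have hwfull2 := (hwin w.length).2
          rw [List.take_of_length_le (le_refl _)] at hwfull hwfull2
          have hrel' : relh (true :: (w ++ b :: rest)) = 1 + relh w + stepz b + relh rest := by
            rw [relh_cons, relh_append, relh_cons, stepz_true]; ring
          have hpre' : ∀ i, -(aH m l) ≤ 1 + relh w + stepz b + relh (rest.take i) := by
            intro i
            have := hpre (w.length + 2 + i)
            rwa [relh_take_block_exact, stepz_true] at this
          have hlen' : rest.length < fuel := by
            have := congrArg List.length (rfl : w ++ b :: rest = w ++ b :: rest)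
            simp only [List.length_cons, List.length_append, List.length_cons] at hlen
            omega
          cases b with
          | true =>
            have hrw : relh w = (m:ℤ) - 2 := by
              simp only [stepz_true] at hexit
              omega
            obtain ⟨bs', wr', hps, hev, hvb, hwr⟩ := ih rest (l+1) hlen' (by
                have h := hrel'
                rw [hrel, stepz_true, hrw] at h
                rw [aH_succ]
                omega) (fun i => by
                have h := hpre' i
                rw [stepz_true, hrw] at h
                rw [aH_succ]
                omega)
            refine ⟨((true,true),w) :: bs', wr', ?_, ?_, ?_, hwr⟩
            · simp only [parseT, hsp, if_true, hps, Option.map_some]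
            · simp [evalB, hev]
            · exact ⟨⟨fun i => by have := hwin i; omega, by omega⟩, hvb⟩
          | false =>
            have hrw : relh w = 0 := by
              simp only [stepz_false] at hexit
              omega
            obtain ⟨bs', wr', hps, hev, hvb, hwr⟩ := ih rest l hlen' (by
                have h := hrel'
                rw [hrel, stepz_false, hrw] at h
                omega) (fun i => by
                have h := hpre' i
                rw [stepz_false, hrw] at h
                omega)
            refine ⟨((true,false),w) :: bs', wr', ?_, ?_, ?_, hwr⟩
            · simp only [parseT, hsp, if_false, hps, Option.map_some, Bool.false_eq_true]
            · simp [evalB, hev]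
            · exact ⟨⟨fun i => by have := hwin i; omega, by omega⟩, hvb⟩
      | false =>
        cases hsp : splitW (1-(m:ℤ)) (-1) (-1) r with
        | none =>
          have hall := splitW_none r (-1) hsp (by omega) (by omega)
          have hlast := hall r.length
          rw [List.take_of_length_le (le_refl _)] at hlast
          have hrelr : relh (false :: r) = -1 + relh r := by rw [relh_cons, stepz_false]
          have hl0 : l = 0 := by
            cases l with
            | zero => rfl
            | succ l' =>
              exfalso
              have h1 := aH_pos hm l'
              have h2 := aH_succ m l'
              omega
          subst hl0
          refine ⟨[], r, ?_, by simp [evalB], rfl, ?_⟩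
          · simp only [parseT, hsp]
          · constructor
            · intro i
              have := hall i
              have hA : aH m 0 = (m:ℤ) - 1 := by unfold aH; push_cast; ring
              omega
            · have hA : aH m 0 = (m:ℤ) - 1 := by unfold aH; push_cast; ring
              omega
        | some y =>
          obtain ⟨w, b, rest⟩ := y
          obtain ⟨hz, hwin, hexit⟩ := splitW_some r (-1) w b rest hsp (by omega) (by omega)
          subst hz
          have hwfull := (hwin w.length).1
          have hwfull2 := (hwin w.length).2
          rw [List.take_of_length_le (le_refl _)] at hwfull hwfull2
          have hrel' : relh (false :: (w ++ b :: rest)) = -1 + relh w + stepz b + relh rest := by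
            rw [relh_cons, relh_append, relh_cons, stepz_false]; ring
          have hpre' : ∀ i, -(aH m l) ≤ -1 + relh w + stepz b + relh (rest.take i) := by
            intro i
            have := hpre (w.length + 2 + i)
            rwa [relh_take_block_exact, stepz_false] at this
          have hlen' : rest.length < fuel := by
            simp only [List.length_cons, List.length_append, List.length_cons] at hlen
            omega
          cases b with
          | true =>
            have hrw : relh w = 0 := by
              simp only [stepz_true] at hexit
              omega
            obtain ⟨bs', wr', hps, hev, hvb, hwr⟩ := ih rest l hlen' (by
                have h := hrel'
                rw [hrel, stepz_true, hrw] at h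
                omega) (fun i => by
                have h := hpre' i
                rw [stepz_true, hrw] at h
                omega)
            refine ⟨((false,true),w) :: bs', wr', ?_, ?_, ?_, hwr⟩
            · simp only [parseT, hsp, hps, Option.map_some]
            · simp [evalB, hev]
            · exact ⟨⟨fun i => by have := hwin i; omega, by omega⟩, hvb⟩
          | false =>
            have hrw : relh w = -((m:ℤ) - 2) := by
              simp only [stepz_false] at hexit
              omega
            have hl1 : 1 ≤ l := by
              cases l with
              | zero =>
                exfalso
                have := hpre (w.length + 2)
                rw [show w.length + 2 = w.length + 2 + 0 by ring, relh_take_block_exact,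
                  stepz_false, hrw] at this
                have hA : aH m 0 = (m:ℤ) - 1 := by unfold aH; push_cast; ring
                simp only [List.take_zero, relh_nil] at this
                omega
              | succ l' => omega
            obtain ⟨l', hll⟩ : ∃ l', l = l' + 1 := ⟨l - 1, by omega⟩
            subst hll
            have hAs := aH_succ m l'
            obtain ⟨bs', wr', hps, hev, hvb, hwr⟩ := ih rest l' hlen' (by
                have h := hrel'
                rw [hrel, stepz_false, hrw] at h
                rw [show (-(aH m l') : ℤ) = -(aH m (l'+1)) + m by rw [hAs]; ring]
                omega) (fun i => by
                have h := hpre' i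
                rw [stepz_false, hrw] at h
                rw [show (-(aH m l') : ℤ) = -(aH m (l'+1)) + m by rw [hAs]; ring]
                omega)
            refine ⟨((false,false),w) :: bs', wr', ?_, ?_, ?_, hwr⟩
            · simp only [parseT, hsp, hps, Option.map_some]
            · simp [evalB, hev]
            · exact ⟨l', rfl, ⟨fun i => by have := hwin i; omega, by omega⟩, hvb⟩

lemma splitW_none_intro {lo hi : ℤ} : ∀ (z : List Bool) (u : ℤ),
    (∀ i, lo ≤ u + relh (z.take i) ∧ u + relh (z.take i) ≤ hi) →
    splitW lo hi u z = none := by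
  intro z
  induction z with
  | nil => intro u _; rfl
  | cons x r ih =>
    intro u hwin
    have h1 := hwin 1
    simp only [List.take_succ_cons, List.take_zero, relh_cons, relh_nil, add_zero] at h1
    rw [splitW, if_pos (by omega), ih (u + stepz x)
      (fun i => by have := hwin (i+1); simpa [List.take_succ_cons, add_assoc] using this)]
    rfl

lemma PT_roundtrip {m : ℕ} (hm : 2 ≤ m) : ∀ (bs : List Blk) (l : ℕ) (wr : List Bool)
    (fuel : ℕ), (evalB bs ++ false :: wr).length < fuel → validB m l bs →
    Strip m ((m:ℤ)-2) 0 wr →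
    parseT m fuel l (evalB bs ++ false :: wr) = some (bs, wr) := by
  have hm2 : (2:ℤ) ≤ m := by exact_mod_cast hm
  intro bs
  induction bs with
  | nil =>
    intro l wr fuel hlen hv hwr
    have hl : l = 0 := hv
    subst hl
    cases fuel with
    | zero => simp at hlen
    | succ fuel =>
      have hnone : splitW (1-(m:ℤ)) (-1) (-1) wr = none := by
        apply splitW_none_intro
        intro i
        have := hwr.1 i
        omega
      simp only [evalB, List.nil_append, parseT, hnone]
  | cons B bs' ih =>
    intro l wr fuel hlen hv hwr
    obtain ⟨⟨a, b⟩, w⟩ := B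
    have hE : evalB (((a,b),w) :: bs') ++ false :: wr
        = a :: (w ++ b :: (evalB bs' ++ false :: wr)) := by simp [evalB]
    rw [hE] at hlen ⊢
    cases fuel with
    | zero => simp at hlen
    | succ fuel =>
      have hlen' : (evalB bs' ++ false :: wr).length < fuel := by
        simp only [List.length_cons, List.length_append] at hlen ⊢
        omega
      cases a <;> cases b
      · -- fall
        obtain ⟨l', hl, hw, hv'⟩ := hv
        subst hl
        have hrw : relh w = -((m:ℤ)-2) := by have := hw.2; omega
        have hspl : splitW (1-(m:ℤ)) (-1) (-1) (w ++ false :: (evalB bs' ++ false :: wr))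
            = some (w, false, evalB bs' ++ false :: wr) := by
          apply splitW_roundtrip
          · intro i
            have := hw.1 i
            omega
          · rw [hrw, stepz_false]
            omega
        simp only [parseT, hspl, ih l' wr fuel hlen' hv' hwr, Option.map_some]
      · -- down
        obtain ⟨hw, hv'⟩ := hv
        have hrw : relh w = 0 := by have := hw.2; omega
        have hspl : splitW (1-(m:ℤ)) (-1) (-1) (w ++ true :: (evalB bs' ++ false :: wr))
            = some (w, true, evalB bs' ++ false :: wr) := by
          apply splitW_roundtrip
          · intro i
            have := hw.1 i
            omega
          · rw [hrw, stepz_true]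
            omega
        simp only [parseT, hspl, ih l wr fuel hlen' hv' hwr, Option.map_some]
      · -- up
        obtain ⟨hw, hv'⟩ := hv
        have hrw : relh w = 0 := by have := hw.2; omega
        have hspl : splitW 1 ((m:ℤ)-1) 1 (w ++ false :: (evalB bs' ++ false :: wr))
            = some (w, false, evalB bs' ++ false :: wr) := by
          apply splitW_roundtrip
          · intro i
            have := hw.1 i
            omega
          · rw [hrw, stepz_false]
            omega
        simp only [parseT, hspl, Bool.false_eq_true, if_false,
          ih l wr fuel hlen' hv' hwr, Option.map_some]
      · -- climb
        obtain ⟨hw, hv'⟩ := hv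
        have hrw : relh w = (m:ℤ)-2 := by have := hw.2; omega
        have hspl : splitW 1 ((m:ℤ)-1) 1 (w ++ true :: (evalB bs' ++ false :: wr))
            = some (w, true, evalB bs' ++ false :: wr) := by
          apply splitW_roundtrip
          · intro i
            have := hw.1 i
            omega
          · rw [hrw, stepz_true]
            omega
        simp only [parseT, hspl, if_true, ih (l+1) wr fuel hlen' hv' hwr, Option.map_some]

def evalFull (w0 : List Bool) (bs : List Blk) (wr : List Bool) : List Bool :=
  w0 ++ true :: (evalB bs ++ false :: wr)

def ValidF (m : ℕ) (w0 : List Bool) (bs : List Blk) (wr : List Bool) : Prop :=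
  Strip m 0 ((m:ℤ)-2) w0 ∧ validB m 0 bs ∧ Strip m ((m:ℤ)-2) 0 wr

lemma aH_zero (m : ℕ) : aH m 0 = (m:ℤ) - 1 := by unfold aH; push_cast; ring

lemma eval_stats {m n : ℕ} (hm : 2 ≤ m) (w0 : List Bool) (bs : List Blk) (wr : List Bool)
    (hV : ValidF m w0 bs wr) (hlen : (evalFull w0 bs wr).length = 2 * n) :
    IsDyckPath n (evalFull w0 bs wr) ∧
    upStepsMod m (m-1) (evalFull w0 bs wr) = 1 + cnt (true,true) bs + cnt (false,true) bs ∧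
    upStepsMod m 0 (evalFull w0 bs wr) = cnt (true,true) bs + cnt (true,false) bs := by
  have hm2 : (2:ℤ) ≤ m := by exact_mod_cast hm
  obtain ⟨hw0, hvb, hwr⟩ := hV
  obtain ⟨E1, E2, E3, E4⟩ := master hm bs 0 wr hvb hwr
  have hA0 := aH_zero m
  have hrw0 : relh w0 = (m:ℤ) - 2 := by have := hw0.2; omega
  have hpre : ∀ i, 0 ≤ relh ((evalFull w0 bs wr).take i) := by
    intro i
    unfold evalFull
    rw [List.take_append, relh_append]
    cases hk : i - w0.length with
    | zero =>
      simp only [List.take_zero, relh_nil, add_zero]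
      have := (hw0.1 i).1
      omega
    | succ k =>
      rw [List.take_of_length_le (by omega : w0.length ≤ i), List.take_succ_cons, relh_cons,
        stepz_true, hrw0]
      have := E2 k
      rw [hA0] at this
      omega
  have hrel : relh (evalFull w0 bs wr) = 0 := by
    unfold evalFull
    rw [relh_append, relh_cons, stepz_true, hrw0, E1, hA0]
    ring
  have hcast : ((m - 1 : ℕ) : ℤ) = (m:ℤ) - 1 := by omega
  have hmod : ((m:ℤ) - 2 + 1) % (m:ℤ) = (m:ℤ) - 1 := by
    rw [show (m:ℤ) - 2 + 1 = (m:ℤ) - 1 by ring]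
    exact Int.emod_eq_of_lt (by omega) (by omega)
  have hw0win : ∀ i, (0:ℤ) ≤ 0 + relh (w0.take i) ∧ 0 + relh (w0.take i) ≤ 0 + ((m:ℤ)-2) := by
    intro i
    have := hw0.1 i
    omega
  have hstat : ∀ c : ℤ, c = 0 ∨ c = (m:ℤ)-1 →
      myU m c 0 (evalFull w0 bs wr)
        = (if ((m:ℤ) - 1) % (m:ℤ) = c then 1 else 0) + myU m c (aH m 0) (evalB bs ++ false :: wr) := by
    intro c hc
    unfold evalFull
    rw [myU_append, myU_strip_zero hm c hc 0 (by simp) w0 0 hw0win, myU_cons,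
      show (0:ℤ) + relh w0 + stepz true = aH m 0 by rw [hrw0, hA0, stepz_true]; ring,
      show (0:ℤ) + relh w0 + 1 = (m:ℤ) - 1 by rw [hrw0]; ring]
    simp only [true_and, zero_add]
  refine ⟨(dyck_iff n _).2 ⟨hlen, hrel, hpre⟩, ?_, ?_⟩
  · rw [show (m-1 : ℕ) = (m-1 : ℕ) from rfl, upStepsMod_eq_myU m (m-1) _ hpre, hcast,
      hstat ((m:ℤ)-1) (Or.inr rfl), E3]
    rw [if_pos (by rw [show ((m:ℤ)-1) % (m:ℤ) = (m:ℤ)-1 from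
      Int.emod_eq_of_lt (by omega) (by omega)])]
    omega
  · rw [upStepsMod_eq_myU m 0 _ hpre]
    rw [show ((0:ℕ):ℤ) = (0:ℤ) by norm_num, hstat 0 (Or.inl rfl), E4]
    rw [if_neg (by rw [show ((m:ℤ)-1) % (m:ℤ) = (m:ℤ)-1 from
      Int.emod_eq_of_lt (by omega) (by omega)]; omega)]
    omega

lemma exists_decomp {m n : ℕ} (hm : 2 ≤ m) (p : List Bool) (hd : IsDyckPath n p)
    (hj : 1 ≤ upStepsMod m (m-1) p) :
    ∃ w0 bs wr, ValidF m w0 bs wr ∧ p = evalFull w0 bs wr := by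
  have hm2 : (2:ℤ) ≤ m := by exact_mod_cast hm
  obtain ⟨hlen, hrel, hpre⟩ := (dyck_iff n p).1 hd
  have hcast : ((m - 1 : ℕ) : ℤ) = (m:ℤ) - 1 := by omega
  have hmy : 0 < myU m ((m:ℤ)-1) 0 p := by
    rw [← hcast, ← upStepsMod_eq_myU m (m-1) p hpre]
    omega
  obtain ⟨i0, hi0⟩ := myU_pos m ((m:ℤ)-1) p 0 hmy
  have hhigh : ∃ i, ¬(0 ≤ 0 + relh (p.take i) ∧ 0 + relh (p.take i) ≤ (m:ℤ)-2) := by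
    refine ⟨i0, ?_⟩
    rintro ⟨h1, h2⟩
    rw [zero_add] at hi0 h1 h2
    rw [Int.emod_eq_of_lt h1 (by omega)] at hi0
    omega
  cases hsp : splitW 0 ((m:ℤ)-2) 0 p with
  | none =>
    exfalso
    obtain ⟨i, hi⟩ := hhigh
    exact hi (splitW_none p 0 hsp (le_refl 0) (by omega) i)
  | some y =>
    obtain ⟨w0, c, t⟩ := y
    obtain ⟨hz, hwin, hexit⟩ := splitW_some p 0 w0 c t hsp (le_refl 0) (by omega)
    have hwfull := hwin w0.length
    rw [List.take_of_length_le (le_refl _)] at hwfull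
    have hec : c = true ∧ relh w0 = (m:ℤ) - 2 := by
      have hpe : 0 ≤ relh w0 + stepz c := by
        have h := hpre (w0.length + 1)
        rw [hz, List.take_append, relh_append,
          List.take_of_length_le (by omega : w0.length ≤ w0.length + 1),
          show w0.length + 1 - w0.length = 1 by omega, List.take_succ_cons, List.take_zero,
          relh_cons, relh_nil] at h
        omega
      cases c with
      | true =>
        refine ⟨rfl, ?_⟩
        simp only [stepz_true] at hpe hexit
        have hx : ¬((0:ℤ) + relh w0 + 1 ≤ (m:ℤ)-2) := fun hh => hexit ⟨by omega, by omega⟩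
        omega
      | false =>
        exfalso
        simp only [stepz_false] at hpe hexit
        exact hexit ⟨by omega, by omega⟩
    obtain ⟨hc, hrw0⟩ := hec
    subst hc
    have hrelt : relh t = -(aH m 0) := by
      rw [hz, relh_append, relh_cons, stepz_true, hrw0] at hrel
      rw [aH_zero]
      omega
    have hpret : ∀ i, -(aH m 0) ≤ relh (t.take i) := by
      intro i
      have h := hpre (w0.length + 1 + i)
      rw [hz, List.take_append, relh_append,
        List.take_of_length_le (by omega : w0.length ≤ w0.length + 1 + i),
        show w0.length + 1 + i - w0.length = i + 1 by omega, List.take_succ_cons,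
        relh_cons, stepz_true, hrw0] at h
      rw [aH_zero]
      omega
    obtain ⟨bs, wr, hps, hev, hvb, hwr⟩ :=
      PT_main hm (t.length + 1) t 0 (by omega) hrelt hpret
    exact ⟨w0, bs, wr, ⟨⟨fun i => by have := hwin i; omega, by omega⟩, hvb, hwr⟩,
      by rw [hz, ← hev]; rfl⟩

lemma decomp_unique {m : ℕ} (hm : 2 ≤ m) (w0 bs wr w0' bs' wr')
    (h : ValidF m w0 bs wr) (h' : ValidF m w0' bs' wr')
    (he : evalFull w0 bs wr = evalFull w0' bs' wr') :
    w0 = w0' ∧ bs = bs' ∧ wr = wr' := by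
  have hm2 : (2:ℤ) ≤ m := by exact_mod_cast hm
  have top : ∀ (v0 : List Bool) (cs : List Blk) (vr : List Bool), ValidF m v0 cs vr →
      splitW 0 ((m:ℤ)-2) 0 (evalFull v0 cs vr)
        = some (v0, true, evalB cs ++ false :: vr) := by
    intro v0 cs vr hV
    apply splitW_roundtrip
    · intro i
      have := hV.1.1 i
      omega
    · have := hV.1.2
      rw [stepz_true]
      omega
  have h1 := top w0 bs wr h
  have h2 := top w0' bs' wr' h'
  rw [he] at h1
  rw [h1] at h2
  simp only [Option.some.injEq, Prod.mk.injEq] at h2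
  obtain ⟨hw0, -, htail⟩ := h2
  have hr1 := PT_roundtrip hm bs 0 wr ((evalB bs ++ false :: wr).length + 1) (by omega)
    h.2.1 h.2.2
  have hr2 := PT_roundtrip hm bs' 0 wr' ((evalB bs ++ false :: wr).length + 1) (by
    rw [← htail]; omega) h'.2.1 h'.2.2
  rw [← htail] at hr2
  rw [hr1] at hr2
  simp only [Option.some.injEq, Prod.mk.injEq] at hr2
  exact ⟨hw0, hr2.1, hr2.2⟩

open Classical in
noncomputable def Phi (m : ℕ) (p : List Bool) : List Bool :=
  if h : ∃ d : List Bool × List Blk × List Bool,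
      ValidF m d.1 d.2.1 d.2.2 ∧ p = evalFull d.1 d.2.1 d.2.2 then
    evalFull h.choose.1 (phiB h.choose.2.1) h.choose.2.2
  else p

lemma Phi_spec {m : ℕ} (hm : 2 ≤ m) (w0 : List Bool) (bs : List Blk) (wr : List Bool)
    (hV : ValidF m w0 bs wr) :
    Phi m (evalFull w0 bs wr) = evalFull w0 (phiB bs) wr := by
  have hex : ∃ d : List Bool × List Blk × List Bool,
      ValidF m d.1 d.2.1 d.2.2 ∧ evalFull w0 bs wr = evalFull d.1 d.2.1 d.2.2 :=
    ⟨(w0, bs, wr), hV, rfl⟩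
  rw [Phi, dif_pos hex]
  obtain ⟨hV', he'⟩ := hex.choose_spec
  obtain ⟨e1, e2, e3⟩ := decomp_unique hm w0 bs wr _ _ _ hV hV' he'
  rw [← e1, ← e2, ← e3]

lemma evalFull_length_phiB (w0 : List Bool) (bs : List Blk) (wr : List Bool) :
    (evalFull w0 (phiB bs) wr).length = (evalFull w0 bs wr).length := by
  simp [evalFull, evalB_length_phiB]

lemma Phi_props {m n : ℕ} (hm : 2 ≤ m) (p : List Bool) (hd : IsDyckPath n p)
    (hj : 1 ≤ upStepsMod m (m-1) p) :
    IsDyckPath n (Phi m p) ∧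
    upStepsMod m (m-1) (Phi m p) = upStepsMod m 0 p + 1 ∧
    upStepsMod m 0 (Phi m p) = upStepsMod m (m-1) p - 1 ∧
    Phi m (Phi m p) = p := by
  obtain ⟨w0, bs, wr, hV, hp⟩ := exists_decomp hm p hd hj
  subst hp
  have hVphi : ValidF m w0 (phiB bs) wr := ⟨hV.1, validB_phiB bs 0 hV.2.1, hV.2.2⟩
  have hlen : (evalFull w0 bs wr).length = 2*n := hd.1
  have hlen2 : (evalFull w0 (phiB bs) wr).length = 2*n := by
    rw [evalFull_length_phiB]; exact hlen
  obtain ⟨hD1, hA1, hB1⟩ := eval_stats hm w0 bs wr hV hlen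
  obtain ⟨hD2, hA2, hB2⟩ := eval_stats hm w0 (phiB bs) wr hVphi hlen2
  rw [cnt_phiB_tt, cnt_phiB_ft] at hA2
  rw [cnt_phiB_tt, cnt_phiB_tf] at hB2
  have hPhi : Phi m (evalFull w0 bs wr) = evalFull w0 (phiB bs) wr := Phi_spec hm w0 bs wr hV
  have hPhi2 : Phi m (evalFull w0 (phiB bs) wr) = evalFull w0 bs wr := by
    rw [Phi_spec hm w0 (phiB bs) wr hVphi, phiB_phiB]
  rw [hPhi]
  exact ⟨hD2, by omega, by omega, hPhi2⟩

end DyckSwap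

/-- For `m ≥ 2`, `j ≥ 1`, the number of Dyck paths of semilength `n` with exactly `j`
up steps at height `h ≡ m-1 (mod m)` and exactly `k` up steps at height
`h ≡ 0 (mod m)` equals the number with exactly `k+1` up steps at height
`h ≡ m-1 (mod m)` and exactly `j-1` up steps at height `h ≡ 0 (mod m)`. -/
theorem upSteps_joint_distribution_swap (m n j k : ℕ) (hm : 2 ≤ m) (hn : 1 ≤ n)
    (hj : 1 ≤ j) :
    Nat.card {p : List Bool // IsDyckPath n p ∧ upStepsMod m (m - 1) p = j ∧
        upStepsMod m 0 p = k} =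
      Nat.card {p : List Bool // IsDyckPath n p ∧ upStepsMod m (m - 1) p = k + 1 ∧
        upStepsMod m 0 p = j - 1} := by
  refine Nat.card_congr ⟨fun x => ⟨DyckSwap.Phi m x.1, ?_⟩, fun y => ⟨DyckSwap.Phi m y.1, ?_⟩,
    fun x => ?_, fun y => ?_⟩
  · obtain ⟨hd, hA, hB⟩ := x.2
    obtain ⟨h1, h2, h3, h4⟩ := DyckSwap.Phi_props hm x.1 hd (by omega)
    exact ⟨h1, by omega, by omega⟩
  · obtain ⟨hd, hA, hB⟩ := y.2
    obtain ⟨h1, h2, h3, h4⟩ := DyckSwap.Phi_props hm y.1 hd (by omega)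
    exact ⟨h1, by omega, by omega⟩
  · obtain ⟨hd, hA, hB⟩ := x.2
    obtain ⟨h1, h2, h3, h4⟩ := DyckSwap.Phi_props hm x.1 hd (by omega)
    exact Subtype.ext h4
  · obtain ⟨hd, hA, hB⟩ := y.2
    obtain ⟨h1, h2, h3, h4⟩ := DyckSwap.Phi_props hm y.1 hd (by omega)
    exact Subtype.ext h4
end

section
/- For n ≥ 1, the number of Dyck paths of semilength n with no up steps at height h ≡ 0 (mod 3) is 2^(n-1). -/

def dpath : Bool → List Bool → List Bool
  | s, [] => [(!s), false]
  | s, x :: b => (!s) :: x :: dpath x b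

def hgt (s : Bool) : ℤ := if s then 2 else 0

/-- prefix delta -/
def del (p : List Bool) (i : ℕ) : ℤ :=
  ((p.take i).count true : ℤ) - ((p.take i).count false : ℤ)

lemma del_zero (p : List Bool) : del p 0 = 0 := by simp [del]

lemma del_cons (c : Bool) (q : List Bool) (j : ℕ) :
    del (c :: q) (j + 1) = (if c then 1 else -1) + del q j := by
  cases c <;> simp [del, List.count_cons] <;> ring

lemma dpath_length (s : Bool) (b : List Bool) : (dpath s b).length = 2 * b.length + 2 := by
  induction b generalizing s with
  | nil => simp [dpath]
  | cons x b ih => simp [dpath, ih x]; ring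

lemma dpath_count_true (s : Bool) (b : List Bool) :
    (dpath s b).count true = b.length + 1 - (if s then 1 else 0) := by
  induction b generalizing s with
  | nil => cases s <;> simp [dpath]
  | cons x b ih =>
    have := ih x
    cases s <;> cases x <;> simp [dpath, List.count_cons] at this ⊢ <;> omega

lemma dpath_count_false (s : Bool) (b : List Bool) :
    (dpath s b).count false = b.length + 1 + (if s then 1 else 0) := by
  induction b generalizing s with
  | nil => cases s <;> simp [dpath]
  | cons x b ih =>
    have := ih x
    cases s <;> cases x <;> simp [dpath, List.count_cons] at this ⊢ <;> omega

lemma dpath_del_bounds (s : Bool) (b : List Bool) (i : ℕ) :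
    0 ≤ hgt s + del (dpath s b) i ∧ hgt s + del (dpath s b) i ≤ 2 := by
  induction b generalizing s i with
  | nil =>
    match i with
    | 0 => cases s <;> simp [del, hgt, dpath]
    | 1 => cases s <;> simp [del, hgt, dpath, List.count_cons]
    | (j+2) =>
      have h0 : del [] j = 0 := by simp [del]
      cases s <;> simp [dpath, del_cons, hgt, h0]
  | cons x b ih =>
    match i with
    | 0 => cases s <;> simp [del, hgt, dpath]
    | 1 => cases s <;> simp [del, hgt, dpath, del_cons]
    | (j+2) =>
      have key : hgt s + del (dpath s (x :: b)) (j+2) = hgt x + del (dpath x b) j := by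
        simp only [dpath, del_cons]
        cases s <;> cases x <;> simp [hgt] <;> ring
      rw [key]; exact ih x j

lemma dpath_inj : ∀ (b1 b2 : List Bool) (s : Bool), b1.length = b2.length →
    dpath s b1 = dpath s b2 → b1 = b2 := by
  intro b1
  induction b1 with
  | nil => intro b2 s hl _; cases b2 with
    | nil => rfl
    | cons x b => simp at hl
  | cons x b ih =>
    intro b2 s hl he
    cases b2 with
    | nil => simp at hl
    | cons y c =>
      simp only [dpath, List.cons.injEq] at he
      obtain ⟨_, hxy, hrec⟩ := he
      subst hxy
      simp at hl
      rw [ih c x hl hrec]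

lemma count_tf (p : List Bool) : p.count true + p.count false = p.length := by
  induction p with
  | nil => simp
  | cons c q ih => cases c <;> simp [List.count_cons] <;> omega

lemma take_succ_get (p : List Bool) (i : ℕ) (h : i < p.length) :
    p.take (i + 1) = p.take i ++ [p.getD i false] := by
  rw [List.take_succ, List.getD_eq_getElem?_getD, List.getElem?_eq_getElem h]
  rfl

lemma del_succ_of_lt (p : List Bool) (i : ℕ) (h : i < p.length) :
    del p (i + 1) = del p i + (if p.getD i false then 1 else -1) := by
  rw [del, del, take_succ_get p i h]
  cases hc : p.getD i false <;> simp [List.count_append] <;> push_cast <;> ring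

lemma del_succ_of_ge (p : List Bool) (i : ℕ) (h : p.length ≤ i) :
    del p (i + 1) = del p i := by
  rw [del, del, List.take_of_length_le h, List.take_of_length_le (by omega)]

lemma stepHeight_eq (p : List Bool) (i : ℕ) (h : 0 ≤ del p (i + 1)) :
    (stepHeight p i : ℤ) = del p (i + 1) := by
  rw [stepHeight]
  rw [del] at h ⊢
  omega

lemma dpath_isDyck (n : ℕ) (hn : 1 ≤ n) (b : List Bool) (hb : b.length = n - 1) :
    IsDyckPath n (dpath false b) := by
  refine ⟨?_, ?_, ?_⟩
  · rw [dpath_length, hb]; omega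
  · rw [dpath_count_true, hb]; simp; omega
  · intro i
    have := (dpath_del_bounds false b i).1
    simp [hgt, del] at this
    omega

lemma dpath_upSteps (b : List Bool) : upStepsMod 3 0 (dpath false b) = 0 := by
  rw [upStepsMod, Finset.card_eq_zero, Finset.filter_eq_empty_iff]
  rintro i hi ⟨hget, hmod⟩
  rw [Finset.mem_range] at hi
  have h1 := (dpath_del_bounds false b i).1
  have h2 := (dpath_del_bounds false b (i + 1)).2
  simp only [hgt, if_neg Bool.false_ne_true, zero_add] at h1 h2
  have hstep := del_succ_of_lt (dpath false b) i hi
  rw [hget] at hstep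
  simp at hstep
  have hsh := stepHeight_eq (dpath false b) i (by omega)
  omega

lemma del_le_two (p : List Bool) (n : ℕ) (hd : IsDyckPath n p)
    (hu : upStepsMod 3 0 p = 0) : ∀ i, del p i ≤ 2 := by
  intro i
  induction i with
  | zero => simp [del]
  | succ i ih =>
    by_cases h : i < p.length
    · cases hc : p.getD i false
      · rw [del_succ_of_lt p i h, hc]; simp; omega
      · rw [del_succ_of_lt p i h, hc]; simp
        by_contra hcon
        push_neg at hcon
        have hlow : 0 ≤ del p (i + 1) := by
          have := hd.2.2 (i + 1)
          rw [del]
          omega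
        have hd3 : del p (i + 1) = 3 := by
          rw [del_succ_of_lt p i h, hc] at hlow ⊢
          simp at hlow ⊢
          omega
        have hsh := stepHeight_eq p i hlow
        rw [hd3] at hsh
        have hmem : i ∈ (Finset.range p.length).filter
            (fun i => p.getD i false = true ∧ stepHeight p i % 3 = 0) := by
          rw [Finset.mem_filter, Finset.mem_range]
          exact ⟨h, hc, by omega⟩
        rw [upStepsMod, Finset.card_eq_zero] at hu
        rw [hu] at hmem
        exact absurd hmem (Finset.notMem_empty i)
    · rw [del_succ_of_ge p i (by omega)]; exact ih

lemma dpath_surj : ∀ (m : ℕ) (p : List Bool) (s : Bool),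
    p.length = 2 * m + 2 →
    (∀ i, 0 ≤ hgt s + del p i ∧ hgt s + del p i ≤ 2) →
    hgt s + del p p.length = 0 →
    ∃ b, b.length = m ∧ dpath s b = p := by
  intro m
  induction m with
  | zero =>
    rintro p s hl hb ht
    match p, hl with
    | [c, d], _ =>
      refine ⟨[], rfl, ?_⟩
      have h1 := hb 1
      have h2 := ht
      simp only [del_cons, del_zero, List.length_cons, List.length_nil] at h1 h2
      have hd0 : del [] 0 = 0 := by simp [del]
      have hd1 : del ([] : List Bool) 0 = 0 := by simp [del]
      simp only [dpath]
      cases s <;> cases c <;> cases d <;>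
        simp_all [hgt, del, List.count_cons] <;> omega
  | succ m ih =>
    rintro p s hl hb ht
    match p, hl with
    | c :: d :: rest, hl =>
      have hlr : rest.length = 2 * m + 2 := by simp at hl; omega
      have h1 := hb 1
      simp only [del_cons, del_zero] at h1
      have hc : c = !s := by
        cases s <;> cases c <;> simp [hgt] at h1 ⊢ <;> omega
      subst hc
      have hkey : ∀ j, hgt d + del rest j = hgt s + del ((!s) :: d :: rest) (j + 2) := by
        intro j
        rw [show j + 2 = (j + 1) + 1 from rfl, del_cons, del_cons]
        cases s <;> cases d <;> simp [hgt] <;> ring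
      have hrb : ∀ i, 0 ≤ hgt d + del rest i ∧ hgt d + del rest i ≤ 2 := by
        intro i; rw [hkey i]; exact hb (i + 2)
      have hrt : hgt d + del rest rest.length = 0 := by
        rw [hkey rest.length]
        have : rest.length + 2 = ((!s) :: d :: rest).length := by simp
        rw [this]; exact ht
      obtain ⟨b', hb'l, hb'⟩ := ih rest d hlr hrb hrt
      refine ⟨d :: b', by simp [hb'l], ?_⟩
      simp [dpath, hb']

/-- The number of Dyck paths of semilength `n` with no up steps at height
`h ≡ 0 (mod 3)` is `2^(n-1)`. -/
theorem no_upSteps_height_div_three (n : ℕ) (hn : 1 ≤ n) :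
    Nat.card {p : List Bool // IsDyckPath n p ∧ upStepsMod 3 0 p = 0} = 2 ^ (n - 1) := by
  have hbij : Function.Bijective
      (fun v : List.Vector Bool (n - 1) =>
        (⟨dpath false v.toList,
          dpath_isDyck n hn v.toList v.toList_length,
          dpath_upSteps v.toList⟩ :
          {p : List Bool // IsDyckPath n p ∧ upStepsMod 3 0 p = 0})) := by
    constructor
    · intro v1 v2 h
      simp only [Subtype.mk.injEq] at h
      exact List.Vector.toList_injective
        (dpath_inj v1.toList v2.toList false
          (v1.toList_length.trans v2.toList_length.symm) h)
    · rintro ⟨p, hd, hu⟩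
      have hlow : ∀ i, 0 ≤ del p i := by
        intro i
        have := hd.2.2 i
        rw [del]; omega
      have hhigh := del_le_two p n hd hu
      have hbnd : ∀ i, 0 ≤ hgt false + del p i ∧ hgt false + del p i ≤ 2 := by
        intro i; simp only [hgt, if_neg Bool.false_ne_true, zero_add]
        exact ⟨hlow i, hhigh i⟩
      have hcf : p.count false = n := by
        have := count_tf p
        have h1 := hd.1
        have h2 := hd.2.1
        omega
      have htot : hgt false + del p p.length = 0 := by
        simp only [hgt, if_neg Bool.false_ne_true, zero_add, del,
          List.take_length, hd.2.1, hcf]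
        ring
      obtain ⟨b, hbl, hbp⟩ := dpath_surj (n - 1) p false (by rw [hd.1]; omega) hbnd htot
      exact ⟨⟨b, hbl⟩, Subtype.ext hbp⟩
  rw [← Nat.card_eq_of_bijective _ hbij, Nat.card_eq_fintype_card, card_vector,
    Fintype.card_bool]
end
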